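/- arXiv:2105.10455 — 10 statements merged into one kernel-verified Lean document; each statement's English description precedes it below -/
import Mathlib

section
/- Let A and B be n×n complex matrices and suppose C and D are n×n complex matrices satisfying ACA = A, BDB = B, CAC = C, DBD = D, DB = AC, and BD = CA. Then the column space of AB equals the column space of A. -/
theorem range_mul_eq_range_left_of_pairPseudoinverse {n : ℕ}
    (A B C D : Matrix (Fin n) (Fin n) ℂ)
    (h1 : A * C * A = A) (h2 : B * D * B = B)
    (h3 : C * A * C = C) (h4 : D * B * D = D)
    (h5 : D * B = A * C) (h6 : B * D = C * A) :
    LinearMap.range (A * B).mulVecLin = LinearMap.range A.mulVecLin := by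
  have key : A * B * D = A := by rw [mul_assoc, h6, ← mul_assoc, h1]
  apply le_antisymm
  · rw [Matrix.mulVecLin_mul]
    exact LinearMap.range_comp_le_range _ _
  · conv_lhs => rw [← key]
    rw [Matrix.mulVecLin_mul]
    exact LinearMap.range_comp_le_range _ _
end

section
/- Let A and B be n×n complex matrices and suppose C and D are n×n complex matrices satisfying ACA = A, BDB = B, CAC = C, DBD = D, DB = AC, and BD = CA. Then the column space of BA equals the column space of B. -/
theorem range_mul_eq_range_right_of_pairPseudoinverse {n : ℕ}
    (A B C D : Matrix (Fin n) (Fin n) ℂ)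
    (h1 : A * C * A = A) (h2 : B * D * B = B)
    (h3 : C * A * C = C) (h4 : D * B * D = D)
    (h5 : D * B = A * C) (h6 : B * D = C * A) :
    LinearMap.range (B * A).mulVecLin = LinearMap.range B.mulVecLin := by
  apply le_antisymm
  · rw [Matrix.mulVecLin_mul]
    exact LinearMap.range_comp_le_range _ _
  · have hB : B = (B * A) * C := by
      rw [Matrix.mul_assoc, ← h5, ← Matrix.mul_assoc, h2]
    conv_lhs => rw [hB]
    rw [Matrix.mulVecLin_mul]
    exact LinearMap.range_comp_le_range _ _
end

section
/- Let A and B be n×n complex matrices and suppose C and D are n×n complex matrices satisfying ACA = A, BDB = B, CAC = C, DBD = D, DB = AC, and BD = CA. Then range(B) ∩ ker(A) = {0}, and consequently ℂⁿ = range(B) ⊕ ker(A) (as the dimensions add up by rank-nullity and rank(A) = rank(B)). -/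
theorem range_inf_ker_eq_bot_of_pairPseudoinverse {n : ℕ}
    (A B C D : Matrix (Fin n) (Fin n) ℂ)
    (h1 : A * C * A = A) (h2 : B * D * B = B)
    (h3 : C * A * C = C) (h4 : D * B * D = D)
    (h5 : D * B = A * C) (h6 : B * D = C * A) :
    LinearMap.range B.mulVecLin ⊓ LinearMap.ker A.mulVecLin = ⊥ ∧
      IsCompl (LinearMap.range B.mulVecLin) (LinearMap.ker A.mulVecLin) := by
  have hdisj : Disjoint (LinearMap.range B.mulVecLin) (LinearMap.ker A.mulVecLin) := by
    rw [disjoint_iff_inf_le]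
    rintro x ⟨⟨y, hy⟩, hx⟩
    simp only [Submodule.mem_bot]
    have hker : A.mulVecLin x = 0 := hx
    have hx1 : (B * D).mulVecLin x = x := by
      rw [← hy, ← LinearMap.comp_apply, ← Matrix.mulVecLin_mul, h2]
    calc x = (B * D).mulVecLin x := hx1.symm
      _ = (C * A).mulVecLin x := by rw [h6]
      _ = C.mulVecLin (A.mulVecLin x) := by rw [Matrix.mulVecLin_mul]; rfl
      _ = 0 := by rw [hker, map_zero]
  have hrankAB : A.rank = B.rank := by
    have hA : A = D * (B * A) := by
      conv_lhs => rw [← h1]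
      rw [← Matrix.mul_assoc, ← h5, Matrix.mul_assoc]
    have hB : B = C * (A * B) := by
      conv_lhs => rw [← h2]
      rw [← Matrix.mul_assoc, h6, Matrix.mul_assoc]
    have h1' : A.rank ≤ B.rank := by
      calc A.rank = (D * (B * A)).rank := by rw [← hA]
        _ ≤ (B * A).rank := Matrix.rank_mul_le_right _ _
        _ ≤ B.rank := Matrix.rank_mul_le_left _ _
    have h2' : B.rank ≤ A.rank := by
      calc B.rank = (C * (A * B)).rank := by rw [← hB]
        _ ≤ (A * B).rank := Matrix.rank_mul_le_right _ _
        _ ≤ A.rank := Matrix.rank_mul_le_left _ _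
    exact le_antisymm h1' h2'
  have hdim : Module.finrank ℂ (LinearMap.range B.mulVecLin) +
      Module.finrank ℂ (LinearMap.ker A.mulVecLin) = Module.finrank ℂ (Fin n → ℂ) := by
    have := LinearMap.finrank_range_add_finrank_ker A.mulVecLin
    have hr : Module.finrank ℂ (LinearMap.range B.mulVecLin) =
        Module.finrank ℂ (LinearMap.range A.mulVecLin) := hrankAB.symm
    rw [hr, this]
  have htop := Submodule.eq_top_of_disjoint _ _ hdim.ge hdisj
  exact ⟨disjoint_iff.mp hdisj, ⟨hdisj, codisjoint_iff.mpr htop⟩⟩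
end

section
/- Let A and B be n×n complex matrices with rank(AB) = rank(A) = rank(B) = rank(BA). Then there exist n×n complex matrices C and D satisfying ACA = A, BDB = B, CAC = C, DBD = D, DB = AC, and BD = CA. -/
open Module LinearMap Submodule

theorem exists_pairPseudoinverse_of_rank {n : ℕ}
    (A B : Matrix (Fin n) (Fin n) ℂ)
    (hAB : (A * B).rank = A.rank) (hA : A.rank = B.rank)
    (hBA : B.rank = (B * A).rank) :
    ∃ C D : Matrix (Fin n) (Fin n) ℂ,
      A * C * A = A ∧ B * D * B = B ∧ C * A * C = C ∧ D * B * D = D ∧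
        D * B = A * C ∧ B * D = C * A := by
  classical
  set f := A.mulVecLin with hf
  set g := B.mulVecLin with hg
  -- rank hypotheses as finrank facts
  have rfg : finrank ℂ (range (f ∘ₗ g)) = finrank ℂ (range f) := by
    rw [← Matrix.mulVecLin_mul]; exact hAB
  have rf_eq_rg : finrank ℂ (range f) = finrank ℂ (range g) := hA
  have rgf : finrank ℂ (range (g ∘ₗ f)) = finrank ℂ (range g) := by
    rw [← Matrix.mulVecLin_mul]; exact hBA.symm
  -- range equalities
  have hrange_fg : range (f ∘ₗ g) = range f :=
    Submodule.eq_of_le_of_finrank_eq (LinearMap.range_comp_le_range g f) rfg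
  have hrange_gf : range (g ∘ₗ f) = range g :=
    Submodule.eq_of_le_of_finrank_eq (LinearMap.range_comp_le_range f g) rgf
  -- rank-nullity
  have rn : ∀ h : (Fin n → ℂ) →ₗ[ℂ] (Fin n → ℂ),
      finrank ℂ (range h) + finrank ℂ (ker h) = finrank ℂ (Fin n → ℂ) := fun h =>
    LinearMap.finrank_range_add_finrank_ker h
  -- kernel equalities
  have hker_gf : ker (g ∘ₗ f) = ker f := by
    refine (Submodule.eq_of_le_of_finrank_eq (LinearMap.ker_le_ker_comp f g) ?_).symm
    have h1 := rn f; have h2 := rn (g ∘ₗ f)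
    have h3 : finrank ℂ (range (g ∘ₗ f)) = finrank ℂ (range f) := by
      rw [rgf, ← rf_eq_rg]
    omega
  have hker_fg : ker (f ∘ₗ g) = ker g := by
    refine (Submodule.eq_of_le_of_finrank_eq (LinearMap.ker_le_ker_comp g f) ?_).symm
    have h1 := rn g; have h2 := rn (f ∘ₗ g)
    have h3 : finrank ℂ (range (f ∘ₗ g)) = finrank ℂ (range g) := by
      rw [rfg, rf_eq_rg]
    omega
  -- disjointness
  have hdis1 : Disjoint (range f) (ker g) := by
    rw [Submodule.disjoint_def]
    rintro x ⟨y, rfl⟩ hx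
    have hy : y ∈ ker (g ∘ₗ f) := by simpa [LinearMap.mem_ker] using hx
    rw [hker_gf, LinearMap.mem_ker] at hy
    exact hy
  have hdis2 : Disjoint (range g) (ker f) := by
    rw [Submodule.disjoint_def]
    rintro x ⟨y, rfl⟩ hx
    have hy : y ∈ ker (f ∘ₗ g) := by simpa [LinearMap.mem_ker] using hx
    rw [hker_fg, LinearMap.mem_ker] at hy
    exact hy
  -- complements
  have hc1 : IsCompl (range f) (ker g) := by
    refine ⟨hdis1, codisjoint_iff.mpr ?_⟩
    apply Submodule.eq_top_of_disjoint _ _ _ hdis1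
    rw [rf_eq_rg]; exact (rn g).ge
  have hc2 : IsCompl (range g) (ker f) := by
    refine ⟨hdis2, codisjoint_iff.mpr ?_⟩
    apply Submodule.eq_top_of_disjoint _ _ _ hdis2
    rw [← rf_eq_rg]; exact (rn f).ge
  -- the isomorphisms induced by f and g between range g and range f
  have hmape : ∀ x ∈ range g, f x ∈ range f := fun x _ => ⟨x, rfl⟩
  have hmape2 : ∀ x ∈ range f, g x ∈ range g := fun x _ => ⟨x, rfl⟩
  set e0 : range g →ₗ[ℂ] range f := f.restrict hmape with he0
  set e0' : range f →ₗ[ℂ] range g := g.restrict hmape2 with he0'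
  have hbij1 : Function.Bijective e0 := by
    constructor
    · intro x y hxy
      have hfx : f (x : Fin n → ℂ) = f (y : Fin n → ℂ) := by
        have h := congrArg (Subtype.val) hxy
        simpa [he0, LinearMap.restrict_coe_apply] using h
      have hmem : ((x : Fin n → ℂ) - y) ∈ range g ⊓ ker f :=
        ⟨sub_mem x.2 y.2, by simp [LinearMap.mem_ker, map_sub, hfx]⟩
      rw [hdis2.eq_bot] at hmem
      exact Subtype.ext (by simpa [sub_eq_zero] using hmem)
    · rintro ⟨y, hy⟩
      rw [← hrange_fg] at hy
      obtain ⟨z, hz⟩ := hy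
      exact ⟨⟨g z, ⟨z, rfl⟩⟩, Subtype.ext (by
        simpa [he0, LinearMap.restrict_coe_apply] using hz)⟩
  have hbij2 : Function.Bijective e0' := by
    constructor
    · intro x y hxy
      have hgx : g (x : Fin n → ℂ) = g (y : Fin n → ℂ) := by
        have h := congrArg (Subtype.val) hxy
        simpa [he0', LinearMap.restrict_coe_apply] using h
      have hmem : ((x : Fin n → ℂ) - y) ∈ range f ⊓ ker g :=
        ⟨sub_mem x.2 y.2, by simp [LinearMap.mem_ker, map_sub, hgx]⟩
      rw [hdis1.eq_bot] at hmem
      exact Subtype.ext (by simpa [sub_eq_zero] using hmem)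
    · rintro ⟨y, hy⟩
      rw [← hrange_gf] at hy
      obtain ⟨z, hz⟩ := hy
      exact ⟨⟨f z, ⟨z, rfl⟩⟩, Subtype.ext (by
        simpa [he0', LinearMap.restrict_coe_apply] using hz)⟩
  set e : range g ≃ₗ[ℂ] range f := LinearEquiv.ofBijective e0 hbij1 with he
  set e2 : range f ≃ₗ[ℂ] range g := LinearEquiv.ofBijective e0' hbij2 with he2
  set pP := (range f).linearProjOfIsCompl (ker g) hc1 with hpP
  set pQ := (range g).linearProjOfIsCompl (ker f) hc2 with hpQ
  set c : (Fin n → ℂ) →ₗ[ℂ] (Fin n → ℂ) :=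
    (range g).subtype ∘ₗ (e.symm : range f →ₗ[ℂ] range g) ∘ₗ pP with hcdef
  set d : (Fin n → ℂ) →ₗ[ℂ] (Fin n → ℂ) :=
    (range f).subtype ∘ₗ (e2.symm : range g →ₗ[ℂ] range f) ∘ₗ pQ with hddef
  have he_apply : ∀ z : range g, (e z : Fin n → ℂ) = f z := fun z => rfl
  have he2_apply : ∀ z : range f, (e2 z : Fin n → ℂ) = g z := fun z => rfl
  -- decomposition facts
  have hsubP : ∀ x, x - (pP x : Fin n → ℂ) ∈ ker g := by
    intro x
    have h := Submodule.projection_add_projection_eq_self hc1 x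
    have h2 : x - (pP x : Fin n → ℂ)
        = ((ker g).linearProjOfIsCompl (range f) hc1.symm x : Fin n → ℂ) :=
      sub_eq_of_eq_add' h.symm
    rw [h2]; exact Subtype.coe_prop _
  have hsubQ : ∀ x, x - (pQ x : Fin n → ℂ) ∈ ker f := by
    intro x
    have h := Submodule.projection_add_projection_eq_self hc2 x
    have h2 : x - (pQ x : Fin n → ℂ)
        = ((ker f).linearProjOfIsCompl (range g) hc2.symm x : Fin n → ℂ) :=
      sub_eq_of_eq_add' h.symm
    rw [h2]; exact Subtype.coe_prop _
  have hgP : ∀ x, g ((pP x : Fin n → ℂ)) = g x := by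
    intro x
    have h := hsubP x
    rw [LinearMap.mem_ker, map_sub, sub_eq_zero] at h
    exact h.symm
  have hfQ : ∀ x, f ((pQ x : Fin n → ℂ)) = f x := by
    intro x
    have h := hsubQ x
    rw [LinearMap.mem_ker, map_sub, sub_eq_zero] at h
    exact h.symm
  -- key computation lemmas
  have hfc : ∀ x, f (c x) = (pP x : Fin n → ℂ) := by
    intro x
    have h : f (c x) = (e (e.symm (pP x)) : Fin n → ℂ) := (he_apply _).symm
    rw [h, LinearEquiv.apply_symm_apply]
  have hgd : ∀ x, g (d x) = (pQ x : Fin n → ℂ) := by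
    intro x
    have h : g (d x) = (e2 (e2.symm (pQ x)) : Fin n → ℂ) := (he2_apply _).symm
    rw [h, LinearEquiv.apply_symm_apply]
  have hcf : ∀ x, c (f x) = (pQ x : Fin n → ℂ) := by
    intro x
    have h1 : pP (f x) = ⟨f x, ⟨x, rfl⟩⟩ :=
      Submodule.linearProjOfIsCompl_apply_left hc1 ⟨f x, ⟨x, rfl⟩⟩
    have h2 : e (pQ x) = ⟨f x, ⟨x, rfl⟩⟩ := Subtype.ext (by rw [he_apply]; exact hfQ x)
    calc c (f x) = ((e.symm (pP (f x))) : Fin n → ℂ) := rfl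
      _ = ((e.symm ⟨f x, ⟨x, rfl⟩⟩) : Fin n → ℂ) := by rw [h1]
      _ = (pQ x : Fin n → ℂ) := by rw [← h2, LinearEquiv.symm_apply_apply]
  have hdg : ∀ x, d (g x) = (pP x : Fin n → ℂ) := by
    intro x
    have h1 : pQ (g x) = ⟨g x, ⟨x, rfl⟩⟩ :=
      Submodule.linearProjOfIsCompl_apply_left hc2 ⟨g x, ⟨x, rfl⟩⟩
    have h2 : e2 (pP x) = ⟨g x, ⟨x, rfl⟩⟩ := Subtype.ext (by rw [he2_apply]; exact hgP x)
    calc d (g x) = ((e2.symm (pQ (g x))) : Fin n → ℂ) := rfl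
      _ = ((e2.symm ⟨g x, ⟨x, rfl⟩⟩) : Fin n → ℂ) := by rw [h1]
      _ = (pP x : Fin n → ℂ) := by rw [← h2, LinearEquiv.symm_apply_apply]
  have hcx : ∀ x, c x ∈ range g := fun x => Subtype.coe_prop _
  have hdx : ∀ x, d x ∈ range f := fun x => Subtype.coe_prop _
  -- produce the matrices
  have hcm : (LinearMap.toMatrix' c).mulVecLin = c := by
    rw [← Matrix.toLin'_apply', Matrix.toLin'_toMatrix']
  have hdm : (LinearMap.toMatrix' d).mulVecLin = d := by
    rw [← Matrix.toLin'_apply', Matrix.toLin'_toMatrix']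
  refine ⟨LinearMap.toMatrix' c, LinearMap.toMatrix' d, ?_, ?_, ?_, ?_, ?_, ?_⟩
  · apply Matrix.toLin'.injective
    refine LinearMap.ext fun x => ?_
    simp only [Matrix.toLin'_apply', Matrix.mulVecLin_mul, hcm, hdm, LinearMap.comp_apply, ← hf, ← hg]
    rw [hcf, hfQ]
  · apply Matrix.toLin'.injective
    refine LinearMap.ext fun x => ?_
    simp only [Matrix.toLin'_apply', Matrix.mulVecLin_mul, hcm, hdm, LinearMap.comp_apply, ← hf, ← hg]
    rw [hdg, hgP]
  · apply Matrix.toLin'.injective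
    refine LinearMap.ext fun x => ?_
    simp only [Matrix.toLin'_apply', Matrix.mulVecLin_mul, hcm, hdm, LinearMap.comp_apply, ← hf, ← hg]
    rw [hcf]
    exact congrArg Subtype.val (Submodule.linearProjOfIsCompl_apply_left hc2 ⟨c x, hcx x⟩)
  · apply Matrix.toLin'.injective
    refine LinearMap.ext fun x => ?_
    simp only [Matrix.toLin'_apply', Matrix.mulVecLin_mul, hcm, hdm, LinearMap.comp_apply, ← hf, ← hg]
    rw [hdg]
    exact congrArg Subtype.val (Submodule.linearProjOfIsCompl_apply_left hc1 ⟨d x, hdx x⟩)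
  · apply Matrix.toLin'.injective
    refine LinearMap.ext fun x => ?_
    simp only [Matrix.toLin'_apply', Matrix.mulVecLin_mul, hcm, hdm, LinearMap.comp_apply, ← hf, ← hg]
    rw [hdg, hfc]
  · apply Matrix.toLin'.injective
    refine LinearMap.ext fun x => ?_
    simp only [Matrix.toLin'_apply', Matrix.mulVecLin_mul, hcm, hdm, LinearMap.comp_apply, ← hf, ← hg]
    rw [hgd, hcf]
end

section
/- Let A and B be n×n complex matrices. The pair [A,B] has a pseudoinverse (i.e., there exist C, D with ACA = A, BDB = B, CAC = C, DBD = D, DB = AC, BD = CA) if and only if rank(AB) = rank(A) = rank(B) = rank(BA). -/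
open Matrix LinearMap

private lemma matEq {n : ℕ} {M N : Matrix (Fin n) (Fin n) ℂ}
    (h : ∀ v, M.mulVec v = N.mulVec v) : M = N := by
  have : Matrix.toLin' M = Matrix.toLin' N :=
    LinearMap.ext fun v => by rw [Matrix.toLin'_apply, Matrix.toLin'_apply, h]
  exact Matrix.toLin'.injective this

private lemma exists_ginv {n : ℕ} (M : Matrix (Fin n) (Fin n) ℂ) :
    ∃ N : Matrix (Fin n) (Fin n) ℂ, M * N * M = M := by
  set f := M.mulVecLin with hf
  obtain ⟨q, hq⟩ := Submodule.exists_isCompl (LinearMap.range f)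
  obtain ⟨g', hg'⟩ := f.rangeRestrict.exists_rightInverse_of_surjective
    (LinearMap.range_rangeRestrict f)
  set π := Submodule.linearProjOfIsCompl _ _ hq
  set g : (Fin n → ℂ) →ₗ[ℂ] (Fin n → ℂ) := g' ∘ₗ π
  have hgm : ∀ x, (LinearMap.toMatrix' g).mulVec x = g x := fun x => by
    rw [← Matrix.toLin'_apply, Matrix.toLin'_toMatrix']
  refine ⟨LinearMap.toMatrix' g, matEq fun v => ?_⟩
  have h1 : π (f v) = ⟨f v, LinearMap.mem_range_self f v⟩ :=
    Submodule.linearProjOfIsCompl_apply_left hq ⟨f v, LinearMap.mem_range_self f v⟩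
  have h2 : f (g' ⟨f v, LinearMap.mem_range_self f v⟩) = f v := by
    have := congrFun (congrArg (DFunLike.coe) hg') ⟨f v, LinearMap.mem_range_self f v⟩
    simpa [LinearMap.rangeRestrict, Subtype.ext_iff] using congrArg Subtype.val this
  calc (M * LinearMap.toMatrix' g * M).mulVec v
      = f (g (f v)) := by
        rw [← Matrix.mulVec_mulVec, ← Matrix.mulVec_mulVec, hgm]; rfl
    _ = f v := by simp [g, h1, h2]
    _ = M.mulVec v := rfl

private lemma right_fix {n : ℕ} {M G X : Matrix (Fin n) (Fin n) ℂ}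
    (h : M * G * M = M)
    (hcol : LinearMap.range X.mulVecLin ≤ LinearMap.range M.mulVecLin) :
    M * G * X = X := by
  refine matEq fun v => ?_
  obtain ⟨w, hw⟩ := hcol (LinearMap.mem_range_self X.mulVecLin v)
  have hw' : X.mulVec v = M.mulVec w := hw.symm
  calc (M * G * X).mulVec v = (M * G).mulVec (X.mulVec v) := by
        rw [← Matrix.mulVec_mulVec]
    _ = (M * G).mulVec (M.mulVec w) := by rw [hw']
    _ = (M * G * M).mulVec w := by rw [Matrix.mulVec_mulVec]
    _ = M.mulVec w := by rw [h]
    _ = X.mulVec v := hw'.symm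

private lemma left_fix {n : ℕ} {M G X : Matrix (Fin n) (Fin n) ℂ}
    (h : M * G * M = M)
    (hker : LinearMap.ker M.mulVecLin ≤ LinearMap.ker X.mulVecLin) :
    X * (G * M) = X := by
  refine matEq fun v => ?_
  have hk : ((G * M).mulVec v - v) ∈ LinearMap.ker M.mulVecLin := by
    have h1 : M.mulVec ((G * M).mulVec v) = M.mulVec v := by
      rw [Matrix.mulVec_mulVec, ← Matrix.mul_assoc, h]
    simp only [LinearMap.mem_ker, Matrix.mulVecLin_apply, Matrix.mulVec_sub, h1, sub_self]
  have hx : X.mulVec ((G * M).mulVec v - v) = 0 := hker hk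
  rw [Matrix.mulVec_sub, sub_eq_zero] at hx
  rw [← Matrix.mulVec_mulVec]
  exact hx

private lemma range_eq_of_rank {n : ℕ} {M N : Matrix (Fin n) (Fin n) ℂ}
    (hle : LinearMap.range M.mulVecLin ≤ LinearMap.range N.mulVecLin)
    (hr : N.rank ≤ M.rank) :
    LinearMap.range M.mulVecLin = LinearMap.range N.mulVecLin :=
  Submodule.eq_of_le_of_finrank_le hle hr

private lemma ker_eq_of_rank {n : ℕ} {M N : Matrix (Fin n) (Fin n) ℂ}
    (hle : LinearMap.ker M.mulVecLin ≤ LinearMap.ker N.mulVecLin)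
    (hr : M.rank ≤ N.rank) :
    LinearMap.ker M.mulVecLin = LinearMap.ker N.mulVecLin := by
  refine (Submodule.eq_of_le_of_finrank_le hle ?_)
  have h1 := M.mulVecLin.finrank_range_add_finrank_ker
  have h2 := N.mulVecLin.finrank_range_add_finrank_ker
  have hr' : Module.finrank ℂ (LinearMap.range M.mulVecLin)
      ≤ Module.finrank ℂ (LinearMap.range N.mulVecLin) := hr
  omega

theorem pairPseudoinverse_iff_rank {n : ℕ}
    (A B : Matrix (Fin n) (Fin n) ℂ) :
    (∃ C D : Matrix (Fin n) (Fin n) ℂ,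
      A * C * A = A ∧ B * D * B = B ∧ C * A * C = C ∧ D * B * D = D ∧
        D * B = A * C ∧ B * D = C * A) ↔
      ((A * B).rank = A.rank ∧ A.rank = B.rank ∧ B.rank = (B * A).rank) := by
  constructor
  · rintro ⟨C, D, h1, h2, h3, h4, h5, h6⟩
    have hB : C * (A * B) = B := by
      calc C * (A * B) = (C * A) * B := by rw [Matrix.mul_assoc]
        _ = (B * D) * B := by rw [h6]
        _ = B := h2
    have hA : D * (B * A) = A := by
      calc D * (B * A) = (D * B) * A := by rw [Matrix.mul_assoc]
        _ = (A * C) * A := by rw [h5]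
        _ = A := h1
    have r1 : B.rank ≤ (A * B).rank := by
      have := Matrix.rank_mul_le_right C (A * B); rwa [hB] at this
    have r2 : A.rank ≤ (B * A).rank := by
      have := Matrix.rank_mul_le_right D (B * A); rwa [hA] at this
    have r3 : (A * B).rank ≤ A.rank := Matrix.rank_mul_le_left A B
    have r4 : (B * A).rank ≤ B.rank := Matrix.rank_mul_le_left B A
    omega
  · rintro ⟨e1, e2, e3⟩
    obtain ⟨Am, hAm⟩ := exists_ginv A
    obtain ⟨Bm, hBm⟩ := exists_ginv B
    obtain ⟨ABm, hABm⟩ := exists_ginv (A * B)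
    obtain ⟨BAm, hBAm⟩ := exists_ginv (B * A)
    have colBA : LinearMap.range (B * A).mulVecLin = LinearMap.range B.mulVecLin := by
      refine range_eq_of_rank ?_ (by omega)
      rw [Matrix.mulVecLin_mul]
      exact LinearMap.range_comp_le_range _ _
    have colAB : LinearMap.range (A * B).mulVecLin = LinearMap.range A.mulVecLin := by
      refine range_eq_of_rank ?_ (by omega)
      rw [Matrix.mulVecLin_mul]
      exact LinearMap.range_comp_le_range _ _
    have kerBA : LinearMap.ker A.mulVecLin ≤ LinearMap.ker (B * A).mulVecLin := by
      rw [Matrix.mulVecLin_mul]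
      exact fun x hx => by
        simp only [LinearMap.mem_ker, LinearMap.comp_apply] at *
        rw [hx]; simp
    have kerAB : LinearMap.ker B.mulVecLin ≤ LinearMap.ker (A * B).mulVecLin := by
      rw [Matrix.mulVecLin_mul]
      exact fun x hx => by
        simp only [LinearMap.mem_ker, LinearMap.comp_apply] at *
        rw [hx]; simp
    have kerBA' : LinearMap.ker (B * A).mulVecLin ≤ LinearMap.ker A.mulVecLin :=
      (ker_eq_of_rank kerBA (by omega)).ge
    have kerAB' : LinearMap.ker (A * B).mulVecLin ≤ LinearMap.ker B.mulVecLin :=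
      (ker_eq_of_rank kerAB (by omega)).ge
    -- the four key identities
    have f1 : A * (BAm * (B * A)) = A := left_fix hBAm kerBA'
    have f2 : (B * A) * BAm * B = B := right_fix hBAm colBA.ge
    have f3 : (A * B) * ABm * A = A := right_fix hABm colAB.ge
    have f4 : B * (ABm * (A * B)) = B := left_fix hABm kerAB'
    -- right-associated versions
    have f1' : A * (BAm * (B * A)) = A := f1
    have f2' : B * (A * (BAm * B)) = B := by
      simpa [Matrix.mul_assoc] using f2
    have f3' : A * (B * (ABm * A)) = A := by
      simpa [Matrix.mul_assoc] using f3
    have f4' : B * (ABm * (A * B)) = B := f4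
    have hAm' : A * (Am * A) = A := by simpa [Matrix.mul_assoc] using hAm
    have hBm' : B * (Bm * B) = B := by simpa [Matrix.mul_assoc] using hBm
    have gAm : ∀ X : Matrix (Fin n) (Fin n) ℂ, A * (Am * (A * X)) = A * X := fun X => by
      simpa [Matrix.mul_assoc] using congrArg (· * X) hAm
    have gBm : ∀ X : Matrix (Fin n) (Fin n) ℂ, B * (Bm * (B * X)) = B * X := fun X => by
      simpa [Matrix.mul_assoc] using congrArg (· * X) hBm
    have g1 : ∀ X : Matrix (Fin n) (Fin n) ℂ, A * (BAm * (B * (A * X))) = A * X := fun X => by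
      simpa [Matrix.mul_assoc] using congrArg (· * X) f1
    have g2 : ∀ X : Matrix (Fin n) (Fin n) ℂ, B * (A * (BAm * (B * X))) = B * X := fun X => by
      simpa [Matrix.mul_assoc] using congrArg (· * X) f2
    have g3 : ∀ X : Matrix (Fin n) (Fin n) ℂ, A * (B * (ABm * (A * X))) = A * X := fun X => by
      simpa [Matrix.mul_assoc] using congrArg (· * X) f3
    have g4 : ∀ X : Matrix (Fin n) (Fin n) ℂ, B * (ABm * (A * (B * X))) = B * X := fun X => by
      simpa [Matrix.mul_assoc] using congrArg (· * X) f4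
    refine ⟨B * ABm * A * Am * (A * BAm * B), A * BAm * B * Bm * (B * ABm * A),
      ?_, ?_, ?_, ?_, ?_, ?_⟩
    · -- A C A = A
      simp only [Matrix.mul_assoc]
      rw [f1', hAm', f3']
    · -- B D B = B
      simp only [Matrix.mul_assoc]
      rw [f4', hBm', f2']
    · -- C A C = C
      simp only [Matrix.mul_assoc]
      rw [g1 (B * (ABm * (A * (Am * (A * (BAm * B)))))),
        gAm (B * (ABm * (A * (Am * (A * (BAm * B)))))),
        g3 (Am * (A * (BAm * B)))]
    · -- D B D = D
      simp only [Matrix.mul_assoc]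
      rw [g4 (A * (BAm * (B * (Bm * (B * (ABm * A)))))),
        gBm (A * (BAm * (B * (Bm * (B * (ABm * A)))))),
        g2 (Bm * (B * (ABm * A)))]
    · -- D B = A C
      simp only [Matrix.mul_assoc]
      rw [f4', hBm', gAm (BAm * B), g3 (BAm * B)]
    · -- B D = C A
      simp only [Matrix.mul_assoc]
      rw [gBm (ABm * A), g2 (ABm * A), f1', hAm']
end

section
/- Let A and B be n×n complex matrices such that the pair [A,B] has a pseudoinverse (equivalently, rank(AB) = rank(A) = rank(B) = rank(BA)). Then there exists an n×n complex matrix S with S² = AB; moreover S can be chosen so that S has no nonzero nilpotent part, i.e., ker(S) = ker(S²). -/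
open Polynomial

/-- Square roots exist modulo `(X - C a) ^ m` when `a ≠ 0`. -/
lemma sqrt_mod_pow (a : ℂ) (ha : a ≠ 0) : ∀ m : ℕ, ∃ q : ℂ[X], (X - C a) ^ m ∣ q ^ 2 - X := by
  intro m
  induction m with
  | zero => exact ⟨0, by simp⟩
  | succ m ih =>
    rcases Nat.eq_zero_or_pos m with hm | hm
    · subst hm
      obtain ⟨c, hc⟩ := IsAlgClosed.exists_pow_nat_eq a (n := 2) (by norm_num)
      refine ⟨C c, ?_⟩
      rw [pow_one, dvd_iff_isRoot]
      simp [IsRoot, hc]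
    · obtain ⟨q, r, hr⟩ := ih
      have hdvd1 : (X - C a) ∣ q ^ 2 - X := dvd_trans (dvd_pow_self _ hm.ne') ⟨r, hr⟩
      have heva : q.eval a ^ 2 = a := by
        have h := dvd_iff_isRoot.mp hdvd1
        simp only [IsRoot, eval_sub, eval_pow, eval_X, sub_eq_zero] at h
        exact h
      have hqa : q.eval a ≠ 0 := by
        intro h
        apply ha
        rw [← heva, h]
        ring
      set c : ℂ := -r.eval a / (2 * q.eval a) with hc
      refine ⟨q + C c * (X - C a) ^ m, ?_⟩
      have key : (q + C c * (X - C a) ^ m) ^ 2 - X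
          = (X - C a) ^ m * (r + 2 * C c * q + C c ^ 2 * (X - C a) ^ m) := by
        linear_combination hr
      rw [key, pow_succ]
      refine mul_dvd_mul_left _ ?_
      rw [dvd_iff_isRoot]
      simp only [IsRoot, eval_add, eval_mul, eval_pow, eval_C, eval_ofNat, eval_X, eval_sub,
        sub_self, zero_pow hm.ne', mul_zero, add_zero]
      rw [hc]
      field_simp
      ring

/-- Combining square roots modulo coprime polynomials. -/
lemma sqrt_mod_mul {p₁ p₂ q₁ q₂ : ℂ[X]} (hco : IsCoprime p₁ p₂)
    (h₁ : p₁ ∣ q₁ ^ 2 - X) (h₂ : p₂ ∣ q₂ ^ 2 - X) :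
    ∃ q : ℂ[X], p₁ * p₂ ∣ q ^ 2 - X := by
  obtain ⟨a, b, hab⟩ := id hco
  refine ⟨q₂ * (a * p₁) + q₁ * (b * p₂), hco.mul_dvd ?_ ?_⟩
  · have d1 : p₁ ∣ (q₂ * (a * p₁) + q₁ * (b * p₂)) - q₁ :=
      ⟨a * (q₂ - q₁), by linear_combination q₁ * hab⟩
    have e : (q₂ * (a * p₁) + q₁ * (b * p₂)) ^ 2 - X
        = ((q₂ * (a * p₁) + q₁ * (b * p₂)) - q₁) * ((q₂ * (a * p₁) + q₁ * (b * p₂)) + q₁)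
          + (q₁ ^ 2 - X) := by ring
    rw [e]
    exact dvd_add (d1.mul_right _) h₁
  · have d2 : p₂ ∣ (q₂ * (a * p₁) + q₁ * (b * p₂)) - q₂ :=
      ⟨b * (q₁ - q₂), by linear_combination q₂ * hab⟩
    have e : (q₂ * (a * p₁) + q₁ * (b * p₂)) ^ 2 - X
        = ((q₂ * (a * p₁) + q₁ * (b * p₂)) - q₂) * ((q₂ * (a * p₁) + q₁ * (b * p₂)) + q₂)
          + (q₂ ^ 2 - X) := by ring
    rw [e]
    exact dvd_add (d2.mul_right _) h₂

/-- Square roots exist modulo a product of linear factors where `0` occurs with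
multiplicity at most one. -/
lemma sqrt_mod_prod (t : Finset ℂ) (m : ℂ → ℕ) (hm : ∀ a ∈ t, a = 0 → m a ≤ 1) :
    ∃ q : ℂ[X], (∏ a ∈ t, (X - C a) ^ m a) ∣ q ^ 2 - X := by
  classical
  induction t using Finset.induction_on with
  | empty => exact ⟨0, by simp⟩
  | @insert a t hat ih =>
    obtain ⟨q₂, hq₂⟩ := ih fun b hb => hm b (Finset.mem_insert_of_mem hb)
    have h1 : ∃ q₁ : ℂ[X], (X - C a) ^ m a ∣ q₁ ^ 2 - X := by
      by_cases haz : a = 0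
      · subst haz
        have hma : m 0 ≤ 1 := hm 0 (Finset.mem_insert_self _ _) rfl
        interval_cases h : m 0
        · exact ⟨0, by simp⟩
        · refine ⟨0, ?_⟩
          rw [pow_one, map_zero, sub_zero]
          refine dvd_sub (by simp) dvd_rfl
      · exact sqrt_mod_pow a haz (m a)
    obtain ⟨q₁, hq₁⟩ := h1
    have hco : IsCoprime ((X - C a) ^ m a) (∏ b ∈ t, (X - C b) ^ m b) := by
      refine IsCoprime.prod_right fun b hb => ?_
      have hne : a ≠ b := fun h => hat (h ▸ hb)
      exact (Polynomial.pairwise_coprime_X_sub_C Function.injective_id hne).pow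
    obtain ⟨q, hq⟩ := sqrt_mod_mul hco hq₁ hq₂
    rw [Finset.prod_insert hat]
    exact ⟨q, hq⟩

/-- A complex square matrix whose kernel equals the kernel of its square has a
square root (a polynomial in the matrix), with the same kernel property. -/
lemma exists_sqrt_of_ker_sq {n : ℕ} (M : Matrix (Fin n) (Fin n) ℂ)
    (hker : ∀ x, M.mulVec (M.mulVec x) = 0 → M.mulVec x = 0) :
    ∃ S : Matrix (Fin n) (Fin n) ℂ, S * S = M ∧
      LinearMap.ker S.mulVecLin = LinearMap.ker (S * S).mulVecLin := by
  classical
  have hint : IsIntegral ℂ M := Algebra.IsIntegral.isIntegral M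
  set p : ℂ[X] := minpoly ℂ M with hp
  have hmono : p.Monic := minpoly.monic hint
  have hp0 : p ≠ 0 := hmono.ne_zero
  -- multiplicity of 0 in p is at most 1
  have hcount : p.roots.count 0 ≤ 1 := by
    by_contra hcon
    push_neg at hcon
    rw [count_roots] at hcon
    have hdvd : (X - C (0 : ℂ)) ^ 2 ∣ p := (le_rootMultiplicity_iff hp0).mp hcon
    rw [map_zero, sub_zero] at hdvd
    obtain ⟨g, hg⟩ := hdvd
    have hgm : g.Monic := by
      have h := hmono
      rw [hg] at h
      exact (monic_X_pow 2).of_mul_monic_left h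
    have hann : aeval M (X * g) = 0 := by
      have hMMg : M * M * aeval M g = aeval M p := by
        rw [hg, map_mul, map_pow, aeval_X, pow_two]
      have hT : ∀ v, (aeval M (X * g)).mulVec v = 0 := by
        intro v
        have h0 : M.mulVec (M.mulVec ((aeval M g).mulVec v)) = 0 := by
          simp only [Matrix.mulVec_mulVec]
          rw [← mul_assoc, hMMg, minpoly.aeval, Matrix.zero_mulVec]
        have h1 := hker _ h0
        rw [map_mul, aeval_X, ← Matrix.mulVec_mulVec]
        exact h1
      apply Matrix.toLin'.injective
      refine LinearMap.ext fun v => ?_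
      rw [Matrix.toLin'_apply, hT v]
      simp
    have hdeg := minpoly.min (A := ℂ) (x := M) (monic_X.mul hgm) hann
    have hnd := natDegree_le_natDegree hdeg
    have h1 : p.natDegree = 2 + g.natDegree := by
      rw [hg, natDegree_mul (pow_ne_zero _ X_ne_zero) hgm.ne_zero, natDegree_pow, natDegree_X]
    have h2 : (X * g).natDegree = 1 + g.natDegree := by
      rw [natDegree_mul X_ne_zero hgm.ne_zero, natDegree_X]
    rw [← hp] at hnd
    omega
  -- p divides q² - X for some q
  have hsplits : p = (p.roots.map fun a => X - C a).prod :=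
    (IsAlgClosed.splits p).eq_prod_roots_of_monic hmono
  have hprodeq : (p.roots.map fun a => X - C a).prod
      = ∏ a ∈ p.roots.toFinset, (X - C a) ^ p.roots.count a :=
    Finset.prod_multiset_map_count _ _
  obtain ⟨q, hpq⟩ := sqrt_mod_prod p.roots.toFinset (fun a => p.roots.count a)
    (fun a _ ha0 => by simpa [ha0] using hcount)
  have hpq : p ∣ q ^ 2 - X := by
    rw [hsplits, hprodeq]
    exact hpq
  obtain ⟨r, hr⟩ := hpq
  -- the square root
  have hS2 : aeval M q * aeval M q = M := by
    rw [← map_mul, ← pow_two, show q ^ 2 = p * r + X from by linear_combination hr, map_add,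
      map_mul, minpoly.aeval, zero_mul, zero_add, aeval_X]
  refine ⟨aeval M q, hS2, ?_⟩
  refine le_antisymm ?_ ?_
  · intro x hx
    simp only [LinearMap.mem_ker, Matrix.mulVecLin_apply] at hx ⊢
    rw [← Matrix.mulVec_mulVec, hx, Matrix.mulVec_zero]
  · intro x hx
    simp only [LinearMap.mem_ker, Matrix.mulVecLin_apply] at hx ⊢
    rw [hS2] at hx
    by_cases hc : p.coeff 0 = 0
    · have hXp : X ∣ p := X_dvd_iff.mpr hc
      have h1 : X ∣ q ^ 2 - X := hXp.trans ⟨r, hr⟩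
      have h2 : X ∣ q ^ 2 := by
        have := dvd_add h1 (dvd_refl X)
        simpa using this
      have hXq : X ∣ q := by
        rw [X_dvd_iff, coeff_zero_eq_eval_zero] at h2 ⊢
        rw [eval_pow] at h2
        exact pow_eq_zero_iff (n := 2) (by norm_num) |>.mp h2
      obtain ⟨r2, hr2⟩ := hXq
      have e : aeval M q = aeval M r2 * M := by
        rw [hr2, mul_comm X r2, map_mul, aeval_X]
      rw [e, ← Matrix.mulVec_mulVec, hx, Matrix.mulVec_zero]
    · have h0 : (aeval M p).mulVec x = 0 := by rw [minpoly.aeval, Matrix.zero_mulVec]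
      have hps : p = p.divX * X + C (p.coeff 0) := (divX_mul_X_add p).symm
      rw [hps, map_add, map_mul, aeval_X, aeval_C, Matrix.add_mulVec, ← Matrix.mulVec_mulVec,
        hx, Matrix.mulVec_zero, zero_add, Algebra.algebraMap_eq_smul_one,
        Matrix.smul_mulVec, Matrix.one_mulVec] at h0
      have hx0 : x = 0 := by
        rcases smul_eq_zero.mp h0 with h | h
        · exact absurd h hc
        · exact h
      rw [hx0, Matrix.mulVec_zero]

theorem exists_sqrt_of_pairPseudoinverse {n : ℕ}
    (A B : Matrix (Fin n) (Fin n) ℂ)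
    (hAB : (A * B).rank = A.rank) (hA : A.rank = B.rank)
    (hBA : B.rank = (B * A).rank) :
    ∃ S : Matrix (Fin n) (Fin n) ℂ, S * S = A * B ∧
      LinearMap.ker S.mulVecLin = LinearMap.ker (S * S).mulVecLin := by
  classical
  -- rank-nullity for matrices
  have hrn : ∀ C : Matrix (Fin n) (Fin n) ℂ,
      C.rank + Module.finrank ℂ (LinearMap.ker C.mulVecLin) = n := by
    intro C
    have h := LinearMap.finrank_range_add_finrank_ker C.mulVecLin
    simpa [Matrix.rank] using h
  -- kernel equalities from the rank hypotheses
  have kb : LinearMap.ker B.mulVecLin = LinearMap.ker (A * B).mulVecLin := by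
    refine Submodule.eq_of_le_of_finrank_le ?_ ?_
    · rw [Matrix.mulVecLin_mul]
      exact LinearMap.ker_le_ker_comp _ _
    · have h1 := hrn (A * B); have h2 := hrn B
      omega
  have ka : LinearMap.ker A.mulVecLin = LinearMap.ker (B * A).mulVecLin := by
    refine Submodule.eq_of_le_of_finrank_le ?_ ?_
    · rw [Matrix.mulVecLin_mul]
      exact LinearMap.ker_le_ker_comp _ _
    · have h1 := hrn (B * A); have h2 := hrn A
      omega
  have kb' : ∀ x, (A * B).mulVec x = 0 → B.mulVec x = 0 := by
    intro x hx
    have : x ∈ LinearMap.ker B.mulVecLin := by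
      rw [kb]
      simpa [LinearMap.mem_ker] using hx
    simpa [LinearMap.mem_ker] using this
  have ka' : ∀ x, (B * A).mulVec x = 0 → A.mulVec x = 0 := by
    intro x hx
    have : x ∈ LinearMap.ker A.mulVecLin := by
      rw [ka]
      simpa [LinearMap.mem_ker] using hx
    simpa [LinearMap.mem_ker] using this
  -- the crucial kernel condition : ker (AB)² = ker (AB)
  have hker : ∀ x, (A * B).mulVec ((A * B).mulVec x) = 0 → (A * B).mulVec x = 0 := by
    intro x hx
    have h1 : B.mulVec ((A * B).mulVec x) = 0 := kb' _ (by rwa [Matrix.mulVec_mulVec] at hx ⊢)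
    have h2 : (B * A).mulVec (B.mulVec x) = 0 := by
      rw [Matrix.mulVec_mulVec] at h1 ⊢
      rw [mul_assoc]
      exact h1
    have h3 : A.mulVec (B.mulVec x) = 0 := ka' _ h2
    rw [← Matrix.mulVec_mulVec]
    exact h3
  exact exists_sqrt_of_ker_sq (A * B) hker
end

section
/- Let A and B be n×n complex matrices with rank(AB) = rank(A) = rank(B) = rank(BA). Then there exist invertible complex matrices P, Q and a complex matrix J (which may be taken upper triangular with ker(J) = ker(J²)) such that A = PJQ⁻¹ and B = QJP⁻¹. -/
open Matrix Polynomial Module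

lemma toMatrix'_mulVecLin' {k l : ℕ} (M : Matrix (Fin k) (Fin l) ℂ) :
    LinearMap.toMatrix' M.mulVecLin = M := by
  rw [← Matrix.toLin'_apply', LinearMap.toMatrix'_toLin']

lemma exists_complement {n r m : ℕ} (P₁ : Matrix (Fin n) (Fin r) ℂ)
    (P₁' : Matrix (Fin r) (Fin n) ℂ) (h : P₁' * P₁ = 1) (hm : r + m = n) :
    ∃ (P₂ : Matrix (Fin n) (Fin m) ℂ) (P₂' : Matrix (Fin m) (Fin n) ℂ),
      P₁' * P₂ = 0 ∧ P₂' * P₁ = 0 ∧ P₂' * P₂ = 1 := by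
  set f := P₁'.mulVecLin with hf
  have hfP : ∀ y, f (P₁ *ᵥ y) = y := by
    intro y
    simp [hf, Matrix.mulVecLin_apply, Matrix.mulVec_mulVec, h, Matrix.one_mulVec]
  have hsurj : Function.Surjective f := fun y => ⟨P₁ *ᵥ y, hfP y⟩
  have hker : finrank ℂ (LinearMap.ker f) = m := by
    have h1 := LinearMap.finrank_range_add_finrank_ker f
    rw [LinearMap.range_eq_top.2 hsurj, finrank_top] at h1
    simp only [Module.finrank_pi, Fintype.card_fin] at h1
    omega
  let c : Basis (Fin m) ℂ (LinearMap.ker f) := Module.finBasisOfFinrankEq ℂ _ hker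
  let emb : (Fin m → ℂ) →ₗ[ℂ] (Fin n → ℂ) :=
    (LinearMap.ker f).subtype ∘ₗ (c.equivFun.symm : (Fin m → ℂ) ≃ₗ[ℂ] _).toLinearMap
  let w : (Fin n → ℂ) →ₗ[ℂ] (Fin n → ℂ) := LinearMap.id - P₁.mulVecLin ∘ₗ f
  have hmemk : ∀ x, w x ∈ LinearMap.ker f := by
    intro x
    rw [LinearMap.mem_ker]
    simp only [w, LinearMap.sub_apply, LinearMap.id_apply, LinearMap.comp_apply, map_sub]
    have : f (P₁.mulVecLin (f x)) = f x := hfP (f x)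
    rw [this, sub_self]
  let g : (Fin n → ℂ) →ₗ[ℂ] LinearMap.ker f :=
    LinearMap.codRestrict _ w hmemk
  let proj : (Fin n → ℂ) →ₗ[ℂ] (Fin m → ℂ) := (c.equivFun : _ ≃ₗ[ℂ] _).toLinearMap ∘ₗ g
  have hembk : ∀ y, emb y ∈ LinearMap.ker f := fun y => (c.equivFun.symm y).2
  have hge : ∀ y, g (emb y) = c.equivFun.symm y := by
    intro y
    apply Subtype.ext
    have h0 : f (emb y) = 0 := LinearMap.mem_ker.mp (hembk y)
    show emb y - P₁.mulVecLin (f (emb y)) = _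
    rw [h0, map_zero, sub_zero]
    rfl
  refine ⟨LinearMap.toMatrix' emb, LinearMap.toMatrix' proj, ?_, ?_, ?_⟩
  · have h1 : f ∘ₗ emb = 0 := LinearMap.ext fun y => LinearMap.mem_ker.mp (hembk y)
    calc P₁' * LinearMap.toMatrix' emb
        = LinearMap.toMatrix' f * LinearMap.toMatrix' emb := by rw [toMatrix'_mulVecLin']
      _ = LinearMap.toMatrix' (f ∘ₗ emb) := (LinearMap.toMatrix'_comp f emb).symm
      _ = 0 := by rw [h1]; exact map_zero _
  · have h2 : proj ∘ₗ P₁.mulVecLin = 0 := by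
      apply LinearMap.ext
      intro y
      have hg0 : g (P₁.mulVecLin y) = 0 := by
        apply Subtype.ext
        show P₁.mulVecLin y - P₁.mulVecLin (f (P₁.mulVecLin y)) = _
        have : f (P₁.mulVecLin y) = y := hfP y
        rw [this, sub_self]
        rfl
      show c.equivFun (g (P₁.mulVecLin y)) = 0
      rw [hg0, map_zero]
    calc LinearMap.toMatrix' proj * P₁
        = LinearMap.toMatrix' proj * LinearMap.toMatrix' P₁.mulVecLin := by
          rw [toMatrix'_mulVecLin']
      _ = LinearMap.toMatrix' (proj ∘ₗ P₁.mulVecLin) := (LinearMap.toMatrix'_comp _ _).symm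
      _ = 0 := by rw [h2]; exact map_zero _
  · have h3 : proj ∘ₗ emb = LinearMap.id := by
      apply LinearMap.ext
      intro y
      show c.equivFun (g (emb y)) = y
      rw [hge y, LinearEquiv.apply_symm_apply]
    calc LinearMap.toMatrix' proj * LinearMap.toMatrix' emb
        = LinearMap.toMatrix' (proj ∘ₗ emb) := (LinearMap.toMatrix'_comp _ _).symm
      _ = 1 := by rw [h3]; exact LinearMap.toMatrix'_id

lemma exists_quad_root (fa pa qa : ℂ) (h : fa = 0 → pa ≠ 0) :
    ∃ t : ℂ, fa * t ^ 2 + 2 * pa * t + qa = 0 := by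
  by_cases hfa : fa = 0
  · have hpa := h hfa
    exact ⟨-qa / (2 * pa), by rw [hfa]; field_simp; ring⟩
  · obtain ⟨d, hd⟩ := IsAlgClosed.exists_pow_nat_eq (pa ^ 2 - fa * qa) (n := 2) (by norm_num)
    refine ⟨(-pa + d) / fa, ?_⟩
    field_simp
    linear_combination hd

lemma exists_sqrt_poly (s : Multiset ℂ) (h0 : (0 : ℂ) ∉ s) :
    ∃ p : ℂ[X], (s.map (fun a => X - C a)).prod ∣ p ^ 2 - X := by
  induction s using Multiset.induction_on with
  | empty => exact ⟨0, by simp⟩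
  | cons a s ih =>
    have ha : a ≠ 0 := fun h => h0 (h ▸ Multiset.mem_cons_self a s)
    have h0s : (0 : ℂ) ∉ s := fun h => h0 (Multiset.mem_cons_of_mem h)
    obtain ⟨p, hp⟩ := ih h0s
    set f : ℂ[X] := (s.map (fun a => X - C a)).prod with hf
    obtain ⟨q, hq⟩ := hp
    have heval : p.eval a ^ 2 - a = f.eval a * q.eval a := by
      have := congrArg (Polynomial.eval a) hq
      simpa using this
    obtain ⟨t, ht⟩ : ∃ t : ℂ, f.eval a * t ^ 2 + 2 * p.eval a * t + q.eval a = 0 := by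
      apply exists_quad_root
      intro hfa hpa
      rw [hfa, zero_mul] at heval
      rw [hpa] at heval
      simp at heval
      exact ha heval
    refine ⟨p + C t * f, ?_⟩
    have key : (p + C t * f) ^ 2 - X = f * (q + 2 * C t * p + C t ^ 2 * f) := by
      have : (p + C t * f) ^ 2 - X = (p ^ 2 - X) + (2 * C t * p + C t ^ 2 * f) * f := by ring
      rw [this, hq]; ring
    have hdvd : (X - C a) ∣ (q + 2 * C t * p + C t ^ 2 * f) := by
      rw [Polynomial.dvd_iff_isRoot]
      show Polynomial.eval a _ = 0
      simp only [Polynomial.eval_add, Polynomial.eval_mul, Polynomial.eval_pow,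
        Polynomial.eval_C, Polynomial.eval_ofNat]
      linear_combination ht
    obtain ⟨u, hu⟩ := hdvd
    refine ⟨u, ?_⟩
    rw [Multiset.map_cons, Multiset.prod_cons, key, hu, ← hf]
    ring

lemma exists_matrix_sqrt {k : ℕ} (M : Matrix (Fin k) (Fin k) ℂ) (h : IsUnit M) :
    ∃ S : Matrix (Fin k) (Fin k) ℂ, S * S = M := by
  have hdet : M.det ≠ 0 := (Matrix.isUnit_iff_isUnit_det M).mp h |>.ne_zero
  have hmonic := M.charpoly_monic
  have hsplit : M.charpoly.Splits := IsAlgClosed.splits _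
  have hroots : M.charpoly = (M.charpoly.roots.map (fun a => X - C a)).prod :=
    hsplit.eq_prod_roots_of_monic hmonic
  have h0 : (0 : ℂ) ∉ M.charpoly.roots := by
    intro hmem
    have := Polynomial.isRoot_of_mem_roots hmem
    rw [Polynomial.IsRoot, ← Polynomial.coeff_zero_eq_eval_zero] at this
    have hd := Matrix.det_eq_sign_charpoly_coeff M
    rw [this, mul_zero] at hd
    exact hdet hd
  obtain ⟨p, hp⟩ := exists_sqrt_poly M.charpoly.roots h0
  rw [← hroots] at hp
  refine ⟨Polynomial.aeval M p, ?_⟩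
  obtain ⟨u, hu⟩ := hp
  have h3 : (Polynomial.aeval M) (M.charpoly * u) = 0 := by
    rw [_root_.map_mul, Matrix.aeval_self_charpoly, zero_mul]
  have h4 := congrArg (Polynomial.aeval M) hu
  rw [map_sub, map_pow, Polynomial.aeval_X, h3, sub_eq_zero] at h4
  rw [← sq, h4]

lemma sumEquiv_val_left {r m k : ℕ} (h : r + m = k) (a : Fin r) :
    ((finSumFinEquiv.trans (finCongr h)) (Sum.inl a) : Fin k).val = a.val := by
  simp

lemma sumEquiv_val_right {r m k : ℕ} (h : r + m = k) (b : Fin m) :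
    ((finSumFinEquiv.trans (finCongr h)) (Sum.inr b) : Fin k).val = r + b.val := by
  simp

lemma exists_triangularization : ∀ {k : ℕ} (M : Matrix (Fin k) (Fin k) ℂ),
    ∃ U : Matrix (Fin k) (Fin k) ℂ, IsUnit U ∧ ∀ i j : Fin k, j < i → (U⁻¹ * M * U) i j = 0 := by
  intro k
  induction k with
  | zero => exact fun M => ⟨1, isUnit_one, fun i _ _ => i.elim0⟩
  | succ n ih =>
    intro M
    obtain ⟨μ, hμ⟩ := Module.End.exists_eigenvalue (M.mulVecLin : Module.End ℂ (Fin (n+1) → ℂ))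
    obtain ⟨v, hv⟩ := hμ.exists_hasEigenvector
    have hv1 : M *ᵥ v = μ • v := hv.apply_eq_smul
    have hv2 : v ≠ 0 := hv.right
    obtain ⟨i₀, hi₀⟩ : ∃ i, v i ≠ 0 := by
      by_contra hc
      push_neg at hc
      exact hv2 (funext fun i => hc i)
    set P₁ : Matrix (Fin (n+1)) (Fin 1) ℂ := Matrix.of (fun i _ => v i) with hP₁
    set P₁' : Matrix (Fin 1) (Fin (n+1)) ℂ :=
      Matrix.of (fun _ j => if j = i₀ then (v i₀)⁻¹ else 0) with hP₁'
    have hP : P₁' * P₁ = 1 := by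
      ext a b
      have hab : a = b := Subsingleton.elim a b
      subst hab
      simp [Matrix.mul_apply, hP₁, hP₁', Matrix.one_apply, ite_mul,
        Finset.sum_ite_eq', inv_mul_cancel₀ hi₀]
    obtain ⟨P₂, P₂', h12, h21, h22⟩ := exists_complement P₁ P₁' hP (by omega : 1 + n = n + 1)
    obtain ⟨W, hW, hT⟩ := ih (P₂' * M * P₂)
    have hWdet : IsUnit W.det := (Matrix.isUnit_iff_isUnit_det W).mp hW
    have hWinv : W⁻¹ * W = 1 := Matrix.nonsing_inv_mul W hWdet
    set e : Fin 1 ⊕ Fin n ≃ Fin (n+1) := finSumFinEquiv.trans (finCongr (by omega)) with he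
    set T : Matrix (Fin n) (Fin n) ℂ := W⁻¹ * (P₂' * M * P₂) * W with hTdef
    set U : Matrix (Fin (n+1)) (Fin (n+1)) ℂ :=
      (fromCols P₁ (P₂ * W)).submatrix id e.symm with hU
    set U' : Matrix (Fin (n+1)) (Fin (n+1)) ℂ :=
      (fromRows P₁' (W⁻¹ * P₂')).submatrix e.symm id with hU'
    have hprod : fromRows P₁' (W⁻¹ * P₂') * fromCols P₁ (P₂ * W) = 1 := by
      rw [fromRows_mul_fromCols]
      have e1 : P₁' * (P₂ * W) = 0 := by rw [← Matrix.mul_assoc, h12, Matrix.zero_mul]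
      have e2 : W⁻¹ * P₂' * P₁ = 0 := by rw [Matrix.mul_assoc, h21, Matrix.mul_zero]
      have e3 : W⁻¹ * P₂' * (P₂ * W) = 1 := by
        rw [Matrix.mul_assoc, ← Matrix.mul_assoc P₂', h22, Matrix.one_mul, hWinv]
      rw [hP, e1, e2, e3, Matrix.fromBlocks_one]
    have hU'U : U' * U = 1 := by
      rw [hU, hU']
      have := Matrix.submatrix_mul_equiv (fromRows P₁' (W⁻¹ * P₂'))
        (fromCols P₁ (P₂ * W)) e.symm (Equiv.refl (Fin (n+1))) e.symm
      simp only [Equiv.coe_refl] at this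
      rw [this, hprod, Matrix.submatrix_one_equiv]
    have hUunit : IsUnit U := by
      rw [Matrix.isUnit_iff_isUnit_det]
      have hd : U'.det * U.det = 1 := by rw [← Matrix.det_mul, hU'U, Matrix.det_one]
      exact IsUnit.of_mul_eq_one _ (mul_comm U'.det U.det ▸ hd)
    have hUinv : U⁻¹ = U' := Matrix.inv_eq_left_inv hU'U
    have hMP₁ : M * P₁ = μ • P₁ := by
      ext i j
      have : (M * P₁) i j = (M *ᵥ v) i := by
        simp [Matrix.mul_apply, Matrix.mulVec, dotProduct, hP₁]
      rw [this, hv1]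
      simp [hP₁]
    have hconj : U⁻¹ * M * U =
        (fromBlocks (μ • 1) (P₁' * M * (P₂ * W)) 0 T).submatrix e.symm e.symm := by
      have s1 := Matrix.submatrix_mul_equiv (fromRows P₁' (W⁻¹ * P₂')) M e.symm
        (Equiv.refl (Fin (n+1))) id
      have s2 := Matrix.submatrix_mul_equiv (fromRows P₁' (W⁻¹ * P₂') * M)
        (fromCols P₁ (P₂ * W)) e.symm (Equiv.refl (Fin (n+1))) e.symm
      simp only [Equiv.coe_refl] at s1 s2
      rw [hUinv, hU, hU']
      conv_lhs => rw [← Matrix.submatrix_id_id M]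
      rw [s1, s2]
      congr 1
      rw [Matrix.fromRows_mul, fromRows_mul_fromCols]
      have b11 : P₁' * M * P₁ = μ • (1 : Matrix (Fin 1) (Fin 1) ℂ) := by
        rw [Matrix.mul_assoc, hMP₁, Matrix.mul_smul, hP]
      have b21 : W⁻¹ * P₂' * M * P₁ = 0 := by
        rw [Matrix.mul_assoc (W⁻¹ * P₂') M P₁, hMP₁, Matrix.mul_smul,
          Matrix.mul_assoc W⁻¹ P₂' P₁, h21, Matrix.mul_zero, smul_zero]
      have b22 : W⁻¹ * P₂' * M * P₂ * W = T := by
        rw [hTdef]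
        simp only [Matrix.mul_assoc]
      rw [← Matrix.mul_assoc, ← Matrix.mul_assoc, b11, b21, b22]
    refine ⟨U, hUunit, fun i j hij => ?_⟩
    rw [hconj]
    have hij' : (j : ℕ) < (i : ℕ) := hij
    rcases h1 : e.symm i with a | b <;> rcases h2 : e.symm j with c | d
    · have hi : i = e (Sum.inl a) := by rw [← h1, Equiv.apply_symm_apply]
      have hj : j = e (Sum.inl c) := by rw [← h2, Equiv.apply_symm_apply]
      have := sumEquiv_val_left (show 1 + n = n + 1 by omega) a
      have := sumEquiv_val_left (show 1 + n = n + 1 by omega) c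
      rw [hi, hj] at hij'
      rw [he] at hij'
      simp only [sumEquiv_val_left] at hij'
      omega
    · have hi : i = e (Sum.inl a) := by rw [← h1, Equiv.apply_symm_apply]
      have hj : j = e (Sum.inr d) := by rw [← h2, Equiv.apply_symm_apply]
      rw [hi, hj, he] at hij'
      simp only [sumEquiv_val_left, sumEquiv_val_right] at hij'
      omega
    · simp [Matrix.submatrix_apply, h1, h2]
    · have hi : i = e (Sum.inr b) := by rw [← h1, Equiv.apply_symm_apply]
      have hj : j = e (Sum.inr d) := by rw [← h2, Equiv.apply_symm_apply]
      rw [hi, hj, he] at hij'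
      simp only [sumEquiv_val_right] at hij'
      have : d < b := by omega
      simp only [Matrix.submatrix_apply, h1, h2, Matrix.fromBlocks_apply₂₂]
      exact hT b d this

lemma toMatrix'_mulVecLin'' {k l : ℕ} (M : Matrix (Fin k) (Fin l) ℂ) :
    LinearMap.toMatrix' M.mulVecLin = M := by
  rw [← Matrix.toLin'_apply', LinearMap.toMatrix'_toLin']

lemma exists_rank_fact {k r : ℕ} (A : Matrix (Fin k) (Fin k) ℂ) (hr : A.rank = r) :
    ∃ (A₁ : Matrix (Fin k) (Fin r) ℂ) (A₂ : Matrix (Fin r) (Fin k) ℂ)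
      (L : Matrix (Fin r) (Fin k) ℂ) (R : Matrix (Fin k) (Fin r) ℂ),
      A = A₁ * A₂ ∧ L * A₁ = 1 ∧ A₂ * R = 1 := by
  set f := A.mulVecLin with hf
  have hrr : finrank ℂ (LinearMap.range f) = r := hr
  let b : Basis (Fin r) ℂ (LinearMap.range f) := Module.finBasisOfFinrankEq ℂ _ hrr
  let emb : (Fin r → ℂ) →ₗ[ℂ] (Fin k → ℂ) :=
    (LinearMap.range f).subtype ∘ₗ (b.equivFun.symm : (Fin r → ℂ) ≃ₗ[ℂ] _).toLinearMap
  let π : (Fin k → ℂ) →ₗ[ℂ] (Fin r → ℂ) :=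
    (b.equivFun : _ ≃ₗ[ℂ] _).toLinearMap ∘ₗ f.rangeRestrict
  have hembπ : emb ∘ₗ π = f := by
    apply LinearMap.ext
    intro x
    show ((LinearMap.range f).subtype (b.equivFun.symm (b.equivFun (f.rangeRestrict x)))) = f x
    rw [LinearEquiv.symm_apply_apply]
    rfl
  have hembinj : Function.Injective emb := by
    simp only [emb, LinearMap.coe_comp, LinearEquiv.coe_coe]
    exact Subtype.val_injective.comp b.equivFun.symm.injective
  have hπsurj : Function.Surjective π := by
    simp only [π, LinearMap.coe_comp, LinearEquiv.coe_coe]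
    exact b.equivFun.surjective.comp f.surjective_rangeRestrict
  obtain ⟨g, hg⟩ := LinearMap.exists_leftInverse_of_injective emb
    (LinearMap.ker_eq_bot.mpr hembinj)
  obtain ⟨g', hg'⟩ := π.exists_rightInverse_of_surjective
    (LinearMap.range_eq_top.mpr hπsurj)
  refine ⟨LinearMap.toMatrix' emb, LinearMap.toMatrix' π, LinearMap.toMatrix' g,
    LinearMap.toMatrix' g', ?_, ?_, ?_⟩
  · rw [← LinearMap.toMatrix'_comp, hembπ, hf, toMatrix'_mulVecLin'']
  · rw [← LinearMap.toMatrix'_comp, hg, LinearMap.toMatrix'_id]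
  · rw [← LinearMap.toMatrix'_comp, hg', LinearMap.toMatrix'_id]

lemma isUnit_of_rank_eq {r : ℕ} (F : Matrix (Fin r) (Fin r) ℂ) (h : F.rank = r) :
    IsUnit F := by
  have hrange : LinearMap.range F.mulVecLin = ⊤ := by
    apply Submodule.eq_top_of_finrank_eq
    rw [show finrank ℂ (LinearMap.range F.mulVecLin) = r from h]
    simp
  obtain ⟨g, hg⟩ := F.mulVecLin.exists_rightInverse_of_surjective hrange
  have h1 : F * LinearMap.toMatrix' g = 1 := by
    rw [← toMatrix'_mulVecLin'' F, ← LinearMap.toMatrix'_comp, hg, LinearMap.toMatrix'_id]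
  rw [Matrix.isUnit_iff_isUnit_det]
  have hd : F.det * (LinearMap.toMatrix' g).det = 1 := by
    rw [← Matrix.det_mul, h1, Matrix.det_one]
  exact IsUnit.of_mul_eq_one _ hd

lemma isUnit_of_left_inv' {k : ℕ} {P' P : Matrix (Fin k) (Fin k) ℂ} (h : P' * P = 1) :
    IsUnit P := by
  rw [Matrix.isUnit_iff_isUnit_det]
  have hd : P'.det * P.det = 1 := by rw [← Matrix.det_mul, h, Matrix.det_one]
  exact IsUnit.of_mul_eq_one _ (mul_comm P'.det P.det ▸ hd)

lemma assemble' {k r m : ℕ} (hm : r + m = k)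
    (P₁ : Matrix (Fin k) (Fin r) ℂ) (P₂ : Matrix (Fin k) (Fin m) ℂ)
    (P₁' : Matrix (Fin r) (Fin k) ℂ) (P₂' : Matrix (Fin m) (Fin k) ℂ)
    (h11 : P₁' * P₁ = 1) (h12 : P₁' * P₂ = 0) (h21 : P₂' * P₁ = 0) (h22 : P₂' * P₂ = 1) :
    ((fromRows P₁' P₂').submatrix (⇑(finSumFinEquiv.trans (finCongr hm)).symm) id) *
      ((fromCols P₁ P₂).submatrix id ⇑(finSumFinEquiv.trans (finCongr hm)).symm) = 1 := by
  set e := finSumFinEquiv.trans (finCongr hm)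
  have s := Matrix.submatrix_mul_equiv (fromRows P₁' P₂') (fromCols P₁ P₂) e.symm
    (Equiv.refl (Fin k)) e.symm
  simp only [Equiv.coe_refl] at s
  rw [s, fromRows_mul_fromCols, h11, h12, h21, h22, Matrix.fromBlocks_one,
    Matrix.submatrix_one_equiv]

lemma sandwich' {k r m : ℕ} (hm : r + m = k)
    (P₁ : Matrix (Fin k) (Fin r) ℂ) (P₂ : Matrix (Fin k) (Fin m) ℂ)
    (C : Matrix (Fin r) (Fin r) ℂ)
    (Q₁' : Matrix (Fin r) (Fin k) ℂ) (Q₂' : Matrix (Fin m) (Fin k) ℂ) :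
    ((fromCols P₁ P₂).submatrix id ⇑(finSumFinEquiv.trans (finCongr hm)).symm) *
      ((fromBlocks C 0 0 0).submatrix (⇑(finSumFinEquiv.trans (finCongr hm)).symm)
        ⇑(finSumFinEquiv.trans (finCongr hm)).symm) *
      ((fromRows Q₁' Q₂').submatrix (⇑(finSumFinEquiv.trans (finCongr hm)).symm) id) =
      P₁ * C * Q₁' := by
  set e := finSumFinEquiv.trans (finCongr hm)
  have s1 := Matrix.submatrix_mul_equiv (fromCols P₁ P₂)
    (fromBlocks C 0 0 0) id e.symm ⇑e.symm
  have s2 := Matrix.submatrix_mul_equiv ((fromCols P₁ P₂ : Matrix (Fin k) (Fin r ⊕ Fin m) ℂ) *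
    (fromBlocks C 0 0 0 : Matrix (Fin r ⊕ Fin m) (Fin r ⊕ Fin m) ℂ))
    (fromRows Q₁' Q₂') id e.symm id
  rw [s1, s2, Matrix.submatrix_id_id, fromCols_mul_fromBlocks]
  simp only [Matrix.mul_zero, add_zero, zero_add]
  rw [fromCols_mul_fromRows, Matrix.zero_mul, add_zero]

theorem exists_jordanSVD_of_rank {n : ℕ}
    (A B : Matrix (Fin n) (Fin n) ℂ)
    (hAB : (A * B).rank = A.rank) (hA : A.rank = B.rank)
    (hBA : B.rank = (B * A).rank) :
    ∃ (P Q J : Matrix (Fin n) (Fin n) ℂ), IsUnit P ∧ IsUnit Q ∧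
      (∀ i j : Fin n, j < i → J i j = 0) ∧
      LinearMap.ker J.mulVecLin = LinearMap.ker (J * J).mulVecLin ∧
      A = P * J * Q⁻¹ ∧ B = Q * J * P⁻¹ := by
  set r := A.rank with hr
  have hrB : B.rank = r := hA.symm
  have hrn : r ≤ n := by rw [hr]; exact A.rank_le_width
  set m := n - r with hmdef
  have hm : r + m = n := by omega
  obtain ⟨A₁, A₂, LA, RA, hAfac, hLA, hRA⟩ := exists_rank_fact A hr.symm
  obtain ⟨B₁, B₂, LB, RB, hBfac, hLB, hRB⟩ := exists_rank_fact B hrB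
  set F := A₂ * B₁ with hFdef
  set G := B₂ * A₁ with hGdef
  -- F and G are invertible
  have hFr : F.rank = r := by
    refine le_antisymm F.rank_le_width ?_
    have h1 : (A * B).rank ≤ F.rank := by
      have hfac : A * B = A₁ * (F * B₂) := by
        rw [hAfac, hBfac, hFdef]; simp only [Matrix.mul_assoc]
      rw [hfac]
      exact le_trans (Matrix.rank_mul_le_right _ _) (Matrix.rank_mul_le_left _ _)
    rw [hAB] at h1
    exact h1
  have hGr : G.rank = r := by
    refine le_antisymm G.rank_le_width ?_
    have h1 : (B * A).rank ≤ G.rank := by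
      have hfac : B * A = B₁ * (G * A₂) := by
        rw [hAfac, hBfac, hGdef]; simp only [Matrix.mul_assoc]
      rw [hfac]
      exact le_trans (Matrix.rank_mul_le_right _ _) (Matrix.rank_mul_le_left _ _)
    rw [← hBA, hrB] at h1
    exact h1
  have hF : IsUnit F := isUnit_of_rank_eq F hFr
  have hG : IsUnit G := isUnit_of_rank_eq G hGr
  have hFdet : IsUnit F.det := (Matrix.isUnit_iff_isUnit_det F).mp hF
  have hGdet : IsUnit G.det := (Matrix.isUnit_iff_isUnit_det G).mp hG
  -- square root of G * F
  obtain ⟨S, hS⟩ := exists_matrix_sqrt (G * F) (hG.mul hF)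
  have hSunit : IsUnit S := by
    rw [Matrix.isUnit_iff_isUnit_det]
    have hd : IsUnit (S.det * S.det) := by
      rw [← Matrix.det_mul, hS]
      exact (Matrix.isUnit_iff_isUnit_det _).mp (hG.mul hF)
    exact isUnit_of_mul_isUnit_left hd
  have hSdet : IsUnit S.det := (Matrix.isUnit_iff_isUnit_det S).mp hSunit
  -- triangularize S
  obtain ⟨U, hU, hTri⟩ := exists_triangularization S
  have hUdet : IsUnit U.det := (Matrix.isUnit_iff_isUnit_det U).mp hU
  set C := U⁻¹ * S * U with hCdef
  have hUU' : U * U⁻¹ = 1 := Matrix.mul_nonsing_inv U hUdet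
  have hU'U : U⁻¹ * U = 1 := Matrix.nonsing_inv_mul U hUdet
  have hFF' : F * F⁻¹ = 1 := Matrix.mul_nonsing_inv F hFdet
  have hF'F : F⁻¹ * F = 1 := Matrix.nonsing_inv_mul F hFdet
  have hGG' : G * G⁻¹ = 1 := Matrix.mul_nonsing_inv G hGdet
  have hG'G : G⁻¹ * G = 1 := Matrix.nonsing_inv_mul G hGdet
  have hCunit : IsUnit C := by
    apply isUnit_of_left_inv' (P' := U⁻¹ * S⁻¹ * U)
    rw [hCdef]
    have hSS' : S⁻¹ * S = 1 := Matrix.nonsing_inv_mul S hSdet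
    calc U⁻¹ * S⁻¹ * U * (U⁻¹ * S * U)
        = U⁻¹ * (S⁻¹ * ((U * U⁻¹) * (S * U))) := by simp only [Matrix.mul_assoc]
      _ = U⁻¹ * (S⁻¹ * (S * U)) := by rw [hUU', Matrix.one_mul]
      _ = U⁻¹ * U := by rw [← Matrix.mul_assoc S⁻¹ S U, hSS', Matrix.one_mul]
      _ = 1 := hU'U
  have hCdet : IsUnit C.det := (Matrix.isUnit_iff_isUnit_det C).mp hCunit
  have hCC' : C * C⁻¹ = 1 := Matrix.mul_nonsing_inv C hCdet
  have hC'C : C⁻¹ * C = 1 := Matrix.nonsing_inv_mul C hCdet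
  -- cancellation helpers
  have cUU' : ∀ Z : Matrix (Fin r) (Fin r) ℂ, U * (U⁻¹ * Z) = Z := fun Z => by
    rw [← Matrix.mul_assoc, hUU', Matrix.one_mul]
  have cU'U : ∀ Z : Matrix (Fin r) (Fin r) ℂ, U⁻¹ * (U * Z) = Z := fun Z => by
    rw [← Matrix.mul_assoc, hU'U, Matrix.one_mul]
  have cGG' : ∀ Z : Matrix (Fin r) (Fin r) ℂ, G * (G⁻¹ * Z) = Z := fun Z => by
    rw [← Matrix.mul_assoc, hGG', Matrix.one_mul]
  have cF'F : ∀ Z : Matrix (Fin r) (Fin r) ℂ, F⁻¹ * (F * Z) = Z := fun Z => by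
    rw [← Matrix.mul_assoc, hF'F, Matrix.one_mul]
  have cCC' : ∀ Z : Matrix (Fin r) (Fin r) ℂ, C * (C⁻¹ * Z) = Z := fun Z => by
    rw [← Matrix.mul_assoc, hCC', Matrix.one_mul]
  have hCC : C * C = U⁻¹ * (G * F) * U := by
    rw [hCdef, ← hS]
    calc U⁻¹ * S * U * (U⁻¹ * S * U)
        = U⁻¹ * (S * (U * (U⁻¹ * (S * U)))) := by simp only [Matrix.mul_assoc]
      _ = U⁻¹ * (S * (S * U)) := by rw [cUU' (S * U)]
      _ = U⁻¹ * (S * S) * U := by simp only [Matrix.mul_assoc]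
  have hCCZ : ∀ Z : Matrix (Fin r) (Fin r) ℂ,
      C * (C * Z) = U⁻¹ * (G * (F * (U * Z))) := fun Z => by
    rw [← Matrix.mul_assoc, hCC]
    simp only [Matrix.mul_assoc]
  -- the conjugating r×r matrices
  have hxx : (C⁻¹ * U⁻¹) * G * (G⁻¹ * U * C) = 1 := by
    calc C⁻¹ * U⁻¹ * G * (G⁻¹ * U * C)
        = C⁻¹ * (U⁻¹ * (G * (G⁻¹ * (U * C)))) := by simp only [Matrix.mul_assoc]
      _ = C⁻¹ * (U⁻¹ * (U * C)) := by rw [cGG' (U * C)]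
      _ = C⁻¹ * C := by rw [cU'U C]
      _ = 1 := hC'C
  have hyy : (U⁻¹ * F⁻¹) * F * U = 1 := by
    calc U⁻¹ * F⁻¹ * F * U
        = U⁻¹ * (F⁻¹ * (F * U)) := by simp only [Matrix.mul_assoc]
      _ = U⁻¹ * U := by rw [cF'F U]
      _ = 1 := hU'U
  have hxCy : (G⁻¹ * U * C) * C * (U⁻¹ * F⁻¹) = 1 := by
    calc G⁻¹ * U * C * C * (U⁻¹ * F⁻¹)
        = G⁻¹ * (U * (C * (C * (U⁻¹ * F⁻¹)))) := by simp only [Matrix.mul_assoc]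
      _ = G⁻¹ * (U * (U⁻¹ * (G * (F * (U * (U⁻¹ * F⁻¹)))))) := by rw [hCCZ]
      _ = G⁻¹ * (G * (F * (U * (U⁻¹ * F⁻¹)))) := by rw [cUU']
      _ = G⁻¹ * (G * (F * F⁻¹)) := by rw [cUU' F⁻¹]
      _ = G⁻¹ * G := by rw [hFF', Matrix.mul_one]
      _ = 1 := hG'G
  have hyCx : U * C * (C⁻¹ * U⁻¹) = 1 := by
    calc U * C * (C⁻¹ * U⁻¹)
        = U * (C * (C⁻¹ * U⁻¹)) := by simp only [Matrix.mul_assoc]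
      _ = U * U⁻¹ := by rw [cCC' U⁻¹]
      _ = 1 := hUU'
  -- build the rectangular blocks
  set P₁ : Matrix (Fin n) (Fin r) ℂ := A₁ * (G⁻¹ * U * C) with hP₁def
  set P₁' : Matrix (Fin r) (Fin n) ℂ := (C⁻¹ * U⁻¹) * B₂ with hP₁'def
  set Q₁ : Matrix (Fin n) (Fin r) ℂ := B₁ * U with hQ₁def
  set Q₁' : Matrix (Fin r) (Fin n) ℂ := (U⁻¹ * F⁻¹) * A₂ with hQ₁'def
  have hP11 : P₁' * P₁ = 1 := by
    have h' : P₁' * P₁ = (C⁻¹ * U⁻¹) * G * (G⁻¹ * U * C) := by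
      rw [hP₁def, hP₁'def, hGdef]; simp only [Matrix.mul_assoc]
    rw [h', hxx]
  have hQ11 : Q₁' * Q₁ = 1 := by
    have h' : Q₁' * Q₁ = (U⁻¹ * F⁻¹) * F * U := by
      rw [hQ₁def, hQ₁'def, hFdef]; simp only [Matrix.mul_assoc]
    rw [h', hyy]
  obtain ⟨P₂, P₂', hp12, hp21, hp22⟩ := exists_complement P₁ P₁' hP11 hm
  obtain ⟨Q₂, Q₂', hq12, hq21, hq22⟩ := exists_complement Q₁ Q₁' hQ11 hm
  set e : Fin r ⊕ Fin m ≃ Fin n := finSumFinEquiv.trans (finCongr hm) with hedef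
  set P : Matrix (Fin n) (Fin n) ℂ := (fromCols P₁ P₂).submatrix id ⇑e.symm with hPdef
  set P' : Matrix (Fin n) (Fin n) ℂ := (fromRows P₁' P₂').submatrix (⇑e.symm) id with hP'def
  set Q : Matrix (Fin n) (Fin n) ℂ := (fromCols Q₁ Q₂).submatrix id ⇑e.symm with hQdef
  set Q' : Matrix (Fin n) (Fin n) ℂ := (fromRows Q₁' Q₂').submatrix (⇑e.symm) id with hQ'def
  have hP'P : P' * P = 1 := assemble' hm P₁ P₂ P₁' P₂' hP11 hp12 hp21 hp22
  have hQ'Q : Q' * Q = 1 := assemble' hm Q₁ Q₂ Q₁' Q₂' hQ11 hq12 hq21 hq22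
  have hPunit : IsUnit P := isUnit_of_left_inv' hP'P
  have hQunit : IsUnit Q := isUnit_of_left_inv' hQ'Q
  have hPinv : P⁻¹ = P' := Matrix.inv_eq_left_inv hP'P
  have hQinv : Q⁻¹ = Q' := Matrix.inv_eq_left_inv hQ'Q
  set J : Matrix (Fin n) (Fin n) ℂ :=
    (fromBlocks C 0 0 0).submatrix (⇑e.symm) ⇑e.symm with hJdef
  refine ⟨P, Q, J, hPunit, hQunit, ?_, ?_, ?_, ?_⟩
  · -- J is upper triangular
    intro i j hij
    have hij' : (j : ℕ) < (i : ℕ) := hij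
    show (fromBlocks C 0 0 0) (e.symm i) (e.symm j) = 0
    rcases h1 : e.symm i with a | b <;> rcases h2 : e.symm j with c | d
    · have hi : i = e (Sum.inl a) := by rw [← h1, Equiv.apply_symm_apply]
      have hj : j = e (Sum.inl c) := by rw [← h2, Equiv.apply_symm_apply]
      rw [hi, hj, hedef] at hij'
      simp only [sumEquiv_val_left] at hij'
      exact hTri a c hij'
    · have hi : i = e (Sum.inl a) := by rw [← h1, Equiv.apply_symm_apply]
      have hj : j = e (Sum.inr d) := by rw [← h2, Equiv.apply_symm_apply]
      rw [hi, hj, hedef] at hij'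
      simp only [sumEquiv_val_left, sumEquiv_val_right] at hij'
      have : (a : ℕ) < r := a.2
      omega
    · simp
    · simp
  · -- kernel condition
    have hJJ : J * J = (fromBlocks (C * C) 0 0 0).submatrix (⇑e.symm) ⇑e.symm := by
      rw [hJdef]
      have s := Matrix.submatrix_mul_equiv (fromBlocks C 0 0 0) (fromBlocks C 0 0 0)
        (⇑e.symm) e.symm ⇑e.symm
      rw [s, Matrix.fromBlocks_multiply]
      simp
    set K : Matrix (Fin n) (Fin n) ℂ :=
      (fromBlocks C⁻¹ 0 0 0).submatrix (⇑e.symm) ⇑e.symm with hKdef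
    have hKJJ : K * (J * J) = J := by
      rw [hJJ, hKdef, hJdef]
      have s := Matrix.submatrix_mul_equiv (fromBlocks C⁻¹ 0 0 0) (fromBlocks (C * C) 0 0 0)
        (⇑e.symm) e.symm ⇑e.symm
      rw [s, Matrix.fromBlocks_multiply]
      have : C⁻¹ * (C * C) = C := by rw [← Matrix.mul_assoc, hC'C, Matrix.one_mul]
      simp [this]
    apply le_antisymm
    · intro v hv
      rw [LinearMap.mem_ker, Matrix.mulVecLin_apply] at hv ⊢
      rw [← Matrix.mulVec_mulVec, hv, Matrix.mulVec_zero]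
    · intro v hv
      rw [LinearMap.mem_ker, Matrix.mulVecLin_apply] at hv ⊢
      have : J *ᵥ v = (K * (J * J)) *ᵥ v := by rw [hKJJ]
      rw [this, ← Matrix.mulVec_mulVec, hv, Matrix.mulVec_zero]
  · -- A = P * J * Q⁻¹
    rw [hQinv, hQ'def, hPdef, hJdef, sandwich' hm P₁ P₂ C Q₁' Q₂']
    have h' : P₁ * C * Q₁' = A₁ * ((G⁻¹ * U * C) * C * (U⁻¹ * F⁻¹)) * A₂ := by
      rw [hP₁def, hQ₁'def]; simp only [Matrix.mul_assoc]
    rw [h', hxCy, Matrix.mul_one, ← hAfac]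
  · -- B = Q * J * P⁻¹
    rw [hPinv, hP'def, hQdef, hJdef, sandwich' hm Q₁ Q₂ C P₁' P₂']
    have h' : Q₁ * C * P₁' = B₁ * (U * C * (C⁻¹ * U⁻¹)) * B₂ := by
      rw [hQ₁def, hP₁'def]; simp only [Matrix.mul_assoc]
    rw [h', hyCx, Matrix.mul_one, ← hBfac]
end

section
/- Let A = [[0,0],[0,1]] and B = [[0,1],[0,0]] (2×2 complex matrices). Then there do not exist invertible matrices P, Q and a matrix J with A = PJQ⁻¹ and B = QJP⁻¹ such that J² is similar to both AB and BA; in particular, BA = [[0,1],[0,0]] has no square root, so [A,B] has no Jordan SVD. -/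
lemma no_sqrt_nilpotent :
    ¬ ∃ S : Matrix (Fin 2) (Fin 2) ℂ, S * S = !![0, 1; 0, 0] := by
  rintro ⟨S, hS⟩
  have e00 := congrFun (congrFun hS 0) 0
  have e01 := congrFun (congrFun hS 0) 1
  have e10 := congrFun (congrFun hS 1) 0
  have e11 := congrFun (congrFun hS 1) 1
  simp [Matrix.mul_apply, Fin.sum_univ_two] at e00 e01 e10 e11
  set a := S 0 0; set b := S 0 1; set c := S 1 0; set d := S 1 1
  have hb : b * (a + d) = 1 := by ring_nf; linear_combination e01
  have had : a + d ≠ 0 := by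
    intro h; rw [h, mul_zero] at hb; exact one_ne_zero hb.symm
  have hc : c = 0 := by
    have : c * (a + d) = 0 := by linear_combination e10
    exact (mul_eq_zero.mp this).resolve_right had
  have ha : a = 0 := by
    have : a * a = 0 := by rw [hc] at e00; linear_combination e00
    exact (mul_self_eq_zero).mp this
  have hd : d = 0 := by
    have : d * d = 0 := by rw [hc] at e11; linear_combination e11
    exact (mul_self_eq_zero).mp this
  exact had (by rw [ha, hd, add_zero])

theorem no_jordanSVD_example :
    (¬ ∃ (P Q J : Matrix (Fin 2) (Fin 2) ℂ), IsUnit P ∧ IsUnit Q ∧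
        (!![0, 0; 0, 1] : Matrix (Fin 2) (Fin 2) ℂ) = P * J * Q⁻¹ ∧
        (!![0, 1; 0, 0] : Matrix (Fin 2) (Fin 2) ℂ) = Q * J * P⁻¹ ∧
        (∃ R : Matrix (Fin 2) (Fin 2) ℂ, IsUnit R ∧
          J * J = R * (!![0, 0; 0, 1] * !![0, 1; 0, 0]) * R⁻¹) ∧
        (∃ S : Matrix (Fin 2) (Fin 2) ℂ, IsUnit S ∧
          J * J = S * (!![0, 1; 0, 0] * !![0, 0; 0, 1]) * S⁻¹)) ∧
    ¬ ∃ S : Matrix (Fin 2) (Fin 2) ℂ, S * S = !![0, 1; 0, 0] := by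
  constructor
  · rintro ⟨P, Q, J, hP, hQ, hA, hB, ⟨R, hR, hJR⟩, ⟨S, hS, hJS⟩⟩
    have hAB : (!![0, 0; 0, 1] : Matrix (Fin 2) (Fin 2) ℂ) * !![0, 1; 0, 0] = 0 := by
      simp [Matrix.mul_fin_two]
      norm_num [← Matrix.ext_iff, Fin.forall_fin_two]
    have hBA : (!![0, 1; 0, 0] : Matrix (Fin 2) (Fin 2) ℂ) * !![0, 0; 0, 1]
        = !![0, 1; 0, 0] := by
      ext i j
      fin_cases i <;> fin_cases j <;> simp [Matrix.mul_apply, Fin.sum_univ_two]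
    rw [hAB, mul_zero, zero_mul] at hJR
    rw [hBA, hJR] at hJS
    have : S * !![0, 1; 0, 0] = 0 := by
      have := congrArg (· * S) hJS.symm
      simpa [Matrix.mul_assoc, Matrix.nonsing_inv_mul _ ((Matrix.isUnit_iff_isUnit_det S).mp hS)] using this
    have hN : (!![0, 1; 0, 0] : Matrix (Fin 2) (Fin 2) ℂ) = 0 := by
      have h2 := congrArg (S⁻¹ * ·) this
      simpa [← Matrix.mul_assoc, Matrix.nonsing_inv_mul _ ((Matrix.isUnit_iff_isUnit_det S).mp hS)] using h2
    have := congrFun (congrFun hN 0) 1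
    simp at this
  · exact no_sqrt_nilpotent
end

section
/- A double-complex square matrix M has a Jordan SVD (M = U[J,J]V* with U, V unitary and J a Jordan matrix) if and only if M has a polar decomposition M = WP with W unitary and P Hermitian. -/
/-- `J` is a matrix in Jordan normal form: its entries vanish off the diagonal and
superdiagonal, and each superdiagonal entry is `0` or `1`, the latter only when the two
adjacent diagonal entries agree (so `J` is a direct sum of Jordan blocks). -/
def IsJordanMatrix {n : ℕ} (J : Matrix (Fin n) (Fin n) ℂ) : Prop :=
  (∀ i j : Fin n, (j : ℕ) ≠ (i : ℕ) → (j : ℕ) ≠ (i : ℕ) + 1 → J i j = 0) ∧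
  (∀ i j : Fin n, (j : ℕ) = (i : ℕ) + 1 → J i j = 0 ∨ (J i j = 1 ∧ J i i = J j j))

namespace JordanSVD
open Polynomial Module

noncomputable section

lemma quot_basis (μ : ℂ) (e : ℕ) :
    ∃ b : Basis (Fin e) ℂ (ℂ[X] ⧸ (Submodule.span ℂ[X] {(X - C μ) ^ e})),
      (∀ (h : 0 < e), (X : ℂ[X]) • b ⟨0, h⟩ = μ • b ⟨0, h⟩) ∧
      (∀ (j : ℕ) (h : j + 1 < e),
        (X : ℂ[X]) • b ⟨j + 1, h⟩ = μ • b ⟨j + 1, h⟩ + b ⟨j, Nat.lt_of_succ_lt h⟩) := by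
  set q : ℂ[X] := (X - C μ) ^ e with hq
  set I : Submodule ℂ[X] ℂ[X] := Submodule.span ℂ[X] {q} with hI
  have hmem : ∀ g : ℂ[X], g ∈ I ↔ q ∣ g := by
    intro g
    rw [hI, Submodule.mem_span_singleton]
    constructor
    · rintro ⟨a, rfl⟩; exact Dvd.intro a (by rw [smul_eq_mul, mul_comm])
    · rintro ⟨a, rfl⟩; exact ⟨a, by rw [smul_eq_mul, mul_comm]⟩
  set v : Fin e → ℂ[X] ⧸ I := fun j => I.mkQ ((X - C μ) ^ (e - 1 - (j : ℕ))) with hv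
  have mkCmul : ∀ (a : ℂ) (g : ℂ[X]), I.mkQ (C a * g) = a • I.mkQ g := by
    intro a g
    have h1 : a • I.mkQ g = C a • I.mkQ g := by rw [C_eq_algebraMap, algebraMap_smul]
    rw [← smul_eq_mul, map_smul, h1]
  have htp : ∀ k : ℕ, (taylor μ) ((X - C μ) ^ k) = X ^ k := by
    intro k
    rw [taylor_apply, pow_comp, sub_comp, X_comp, C_comp, add_sub_cancel_right]
  have hind : LinearIndependent ℂ v := by
    rw [Fintype.linearIndependent_iff]
    intro c hsum j
    have htg : (taylor μ) (∑ i : Fin e, C (c i) * (X - C μ) ^ (e - 1 - (i : ℕ)))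
        = ∑ i : Fin e, C (c i) * X ^ (e - 1 - (i : ℕ)) := by
      rw [map_sum]
      exact Finset.sum_congr rfl fun i _ => by rw [taylor_mul, taylor_C, htp]
    have hgI : (∑ i : Fin e, C (c i) * (X - C μ) ^ (e - 1 - (i : ℕ))) ∈ I := by
      rw [← Submodule.Quotient.mk_eq_zero]
      have : (Submodule.Quotient.mk (∑ i : Fin e, C (c i) * (X - C μ) ^ (e - 1 - (i : ℕ)))
          : ℂ[X] ⧸ I) = ∑ i : Fin e, c i • v i := by
        show I.mkQ _ = _
        rw [map_sum]
        exact Finset.sum_congr rfl fun i _ => mkCmul _ _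
      rw [this, hsum]
    obtain ⟨h, hh⟩ := (hmem _).mp hgI
    have hG : (∑ i : Fin e, C (c i) * X ^ (e - 1 - (i : ℕ))) = 0 := by
      apply Polynomial.eq_zero_of_dvd_of_degree_lt (p := X ^ e)
      · exact ⟨taylor μ h, by rw [← htg, hh, taylor_mul, hq, htp]⟩
      · rw [degree_X_pow]
        refine (Polynomial.degree_sum_le _ _).trans_lt ?_
        rw [Finset.sup_lt_iff (by exact_mod_cast WithBot.bot_lt_coe e)]
        intro i _
        refine (Polynomial.degree_C_mul_X_pow_le _ _).trans_lt ?_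
        have hie : e - 1 - (i : ℕ) < e := by have := i.isLt; omega
        exact_mod_cast hie
    have := congrArg (fun p => Polynomial.coeff p (e - 1 - (j : ℕ))) hG
    simp only [Polynomial.finset_sum_coeff, Polynomial.coeff_C_mul_X_pow] at this
    rw [Finset.sum_eq_single j] at this
    · simpa using this
    · intro i _ hij
      have hne : (e - 1 - (j : ℕ)) ≠ (e - 1 - (i : ℕ)) := by
        have hi := i.isLt; have hj := j.isLt
        intro hcon; exact hij (Fin.ext (by omega))
      simp [if_neg hne]
    · intro h; exact absurd (Finset.mem_univ j) h
  have hspan : ⊤ ≤ Submodule.span ℂ (Set.range v) := by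
    rintro x -
    obtain ⟨g, rfl⟩ := Submodule.mkQ_surjective I x
    have hrepr : I.mkQ g = I.mkQ ((taylor μ g).sum fun i a => C a * (X - C μ) ^ i) := by
      rw [Polynomial.sum_taylor_eq]
    rw [hrepr, Polynomial.sum, map_sum]
    refine Submodule.sum_mem _ fun i _ => ?_
    by_cases hie : i < e
    · rw [mkCmul]
      have hexp : e - 1 - (e - 1 - i) = i := by omega
      have hvv : v ⟨e - 1 - i, by omega⟩ = I.mkQ ((X - C μ) ^ i) := by
        show I.mkQ ((X - C μ) ^ (e - 1 - (e - 1 - i))) = _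
        rw [hexp]
      rw [← hvv]
      exact Submodule.smul_mem _ _ (Submodule.subset_span ⟨_, rfl⟩)
    · have : I.mkQ (C ((taylor μ g).coeff i) * (X - C μ) ^ i) = 0 := by
        rw [Submodule.mkQ_apply, Submodule.Quotient.mk_eq_zero]
        exact (hmem _).mpr (Dvd.dvd.mul_left (pow_dvd_pow _ (le_of_not_gt hie)) _)
      rw [this]; exact Submodule.zero_mem _
  have hXsmul : ∀ k : ℕ, (X : ℂ[X]) • I.mkQ ((X - C μ) ^ k)
      = I.mkQ ((X - C μ) ^ (k + 1)) + μ • I.mkQ ((X - C μ) ^ k) := by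
    intro k
    rw [← map_smul, smul_eq_mul, ← mkCmul, ← map_add]
    congr 1
    ring
  refine ⟨Basis.mk hind hspan, ?_, ?_⟩
  · intro h
    simp only [Basis.coe_mk]
    rw [hv]
    simp only []
    rw [hXsmul]
    have h1 : (e - 1 - 0) + 1 = e := by omega
    rw [h1]
    have h2 : I.mkQ ((X - C μ) ^ e) = 0 := by
      rw [Submodule.mkQ_apply, Submodule.Quotient.mk_eq_zero]
      exact (hmem _).mpr dvd_rfl
    rw [h2, zero_add]
  · intro j h
    simp only [Basis.coe_mk]
    rw [hv]
    simp only []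
    rw [hXsmul]
    have h1 : (e - 1 - (j + 1)) + 1 = e - 1 - j := by omega
    rw [h1, add_comm]


lemma dfinsupp_basis_apply' {ι : Type*} [DecidableEq ι] {M : ι → Type*}
    [∀ i, AddCommMonoid (M i)] [∀ i, Module ℂ (M i)] {η : ι → Type*}
    (B : ∀ i, Basis (η i) ℂ (M i)) (x : Σ i, η i) :
    (DFinsupp.basis B : Basis (Σ i, η i) ℂ (DirectSum ι M)) x
      = DFinsupp.single x.1 (B x.1 x.2) := by
  apply (DFinsupp.basis B : Basis (Σ i, η i) ℂ (DirectSum ι M)).repr.injective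
  rw [Basis.repr_self]
  symm
  show (((DFinsupp.mapRange.linearEquiv fun i => (B i).repr).trans
      (sigmaFinsuppLequivDFinsupp ℂ).symm)) (DFinsupp.single x.1 (B x.1 x.2)) = _
  rw [LinearEquiv.trans_apply]
  erw [DFinsupp.mapRange.linearEquiv_apply]
  rw [DFinsupp.mapRange_single, Basis.repr_self, LinearEquiv.symm_apply_eq,
    sigmaFinsuppLequivDFinsupp_apply]
  exact (sigmaFinsuppEquivDFinsupp_single x 1).symm

lemma ds_single_smul {ι : Type*} [DecidableEq ι] {M : ι → Type*}
    [∀ i, AddCommMonoid (M i)] [∀ i, Module ℂ[X] (M i)] (r : ℂ[X]) (i : ι) (m : M i) :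
    (r • (DFinsupp.single i m : DirectSum ι M)) = DFinsupp.single i (r • m) := by
  exact (DFinsupp.single_smul r m).symm

lemma ds_single_smul' {ι : Type*} [DecidableEq ι] {M : ι → Type*}
    [∀ i, AddCommMonoid (M i)] [∀ i, Module ℂ (M i)] (r : ℂ) (i : ι) (m : M i) :
    (r • (DFinsupp.single i m : DirectSum ι M)) = DFinsupp.single i (r • m) := by
  exact (DFinsupp.single_smul r m).symm

lemma ds_single_add {ι : Type*} [DecidableEq ι] {M : ι → Type*}
    [∀ i, AddCommMonoid (M i)] (i : ι) (m m' : M i) :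
    (DFinsupp.single i (m + m') : DirectSum ι M)
      = DFinsupp.single i m + DFinsupp.single i m' := by
  exact DFinsupp.single_add i m m'

lemma quot_basis_irred (p : ℂ[X]) (hp : Irreducible p) (e : ℕ) :
    ∃ (μ : ℂ) (b : Basis (Fin e) ℂ (ℂ[X] ⧸ (Submodule.span ℂ[X] {p ^ e}))),
      (∀ (h : 0 < e), (X : ℂ[X]) • b ⟨0, h⟩ = μ • b ⟨0, h⟩) ∧
      (∀ (j : ℕ) (h : j + 1 < e),
        (X : ℂ[X]) • b ⟨j + 1, h⟩ = μ • b ⟨j + 1, h⟩ + b ⟨j, Nat.lt_of_succ_lt h⟩) := by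
  have hdeg : p.degree ≠ 0 := (Polynomial.degree_pos_of_irreducible hp).ne'
  obtain ⟨μ, hroot⟩ := IsAlgClosed.exists_root p hdeg
  have hassoc : Associated ((X - C μ) ^ e) (p ^ e) :=
    ((irreducible_X_sub_C μ).associated_of_dvd hp (dvd_iff_isRoot.mpr hroot)).pow_pow
  have hspan : (Submodule.span ℂ[X] {(X - C μ) ^ e}) = Submodule.span ℂ[X] {p ^ e} :=
    Ideal.span_singleton_eq_span_singleton.mpr hassoc
  obtain ⟨b, h0, hsucc⟩ := quot_basis μ e
  set E := Submodule.quotEquivOfEq _ _ hspan with hE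
  refine ⟨μ, b.map (E.restrictScalars ℂ), ?_, ?_⟩
  · intro h
    simp only [Basis.map_apply]
    show (X : ℂ[X]) • E (b ⟨0, h⟩) = μ • E (b ⟨0, h⟩)
    rw [← map_smul, h0 h]
    exact map_smul (E.restrictScalars ℂ) μ _
  · intro j h
    simp only [Basis.map_apply]
    show (X : ℂ[X]) • E (b ⟨j + 1, h⟩)
        = μ • E (b ⟨j + 1, h⟩) + E (b ⟨j, Nat.lt_of_succ_lt h⟩)
    rw [← map_smul, hsucc j h, map_add]
    congr 1
    exact map_smul (E.restrictScalars ℂ) μ _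


lemma flatten_equiv {N : ℕ} (E : Fin N → ℕ) :
    ∃ σ : (Σ k : Fin N, Fin (E k)) ≃ Fin (∑ k, E k),
      ∀ (k : Fin N) (j j' : Fin (E k)), (j' : ℕ) = (j : ℕ) + 1 →
        (σ ⟨k, j'⟩ : ℕ) = (σ ⟨k, j⟩ : ℕ) + 1 := by
  set E' : ℕ → ℕ := fun m => if h : m < N then E ⟨m, h⟩ else 0 with hE'
  set off : ℕ → ℕ := fun m => ∑ k ∈ Finset.range m, E' k with hoff
  have hE'eq : ∀ k : Fin N, E' (k : ℕ) = E k := by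
    intro k; rw [hE']; simp only [k.isLt, dif_pos]
  have hoff_succ : ∀ m, off (m + 1) = off m + E' m := fun m => Finset.sum_range_succ E' m
  have hoff_mono : ∀ {a b}, a ≤ b → off a ≤ off b := fun {a b} hab =>
    Finset.sum_le_sum_of_subset (Finset.range_subset_range.mpr hab)
  have hoffN : off N = ∑ k, E k := by
    show ∑ k ∈ Finset.range N, E' k = _
    rw [← Fin.sum_univ_eq_sum_range]
    exact Finset.sum_congr rfl fun k _ => hE'eq k
  have hlt : ∀ x : Σ k : Fin N, Fin (E k), off (x.1 : ℕ) + (x.2 : ℕ) < ∑ k, E k := by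
    rintro ⟨k, j⟩
    have h1 : off (k : ℕ) + (j : ℕ) < off ((k : ℕ) + 1) := by
      rw [hoff_succ, hE'eq]
      exact Nat.add_lt_add_left j.isLt _
    exact h1.trans_le (hoffN ▸ hoff_mono k.isLt)
  set F : (Σ k : Fin N, Fin (E k)) → Fin (∑ k, E k) := fun x => ⟨off (x.1 : ℕ) + (x.2 : ℕ), hlt x⟩
    with hF
  have hinj : Function.Injective F := by
    rintro ⟨k, j⟩ ⟨k', j'⟩ hkj
    have hv : off (k : ℕ) + (j : ℕ) = off (k' : ℕ) + (j' : ℕ) := congrArg Fin.val hkj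
    have hkk : (k : ℕ) = (k' : ℕ) := by
      by_contra hne
      rcases Nat.lt_or_ge (k : ℕ) (k' : ℕ) with hlt' | hge
      · have : off ((k : ℕ) + 1) ≤ off (k' : ℕ) := hoff_mono hlt'
        rw [hoff_succ, hE'eq] at this
        have := j.isLt
        omega
      · have hlt' : (k' : ℕ) < (k : ℕ) := by omega
        have : off ((k' : ℕ) + 1) ≤ off (k : ℕ) := hoff_mono hlt'
        rw [hoff_succ, hE'eq] at this
        have := j'.isLt
        omega
    have hk : k = k' := Fin.ext hkk
    subst hk
    have : (j : ℕ) = (j' : ℕ) := by omega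
    exact congrArg _ (Fin.ext this)
  have hbij : Function.Bijective F := by
    rw [Fintype.bijective_iff_injective_and_card]
    refine ⟨hinj, ?_⟩
    simp [Fintype.card_sigma]
  refine ⟨Equiv.ofBijective F hbij, ?_⟩
  intro k j j' hjj
  show off (k : ℕ) + (j' : ℕ) = (off (k : ℕ) + (j : ℕ)) + 1
  omega


lemma exists_jordan_basis {n : ℕ} (f : Module.End ℂ (Fin n → ℂ)) :
    ∃ (b : Basis (Fin n) ℂ (Fin n → ℂ)) (d : Fin n → ℂ) (t : Fin n → Bool),
      ∀ a : Fin n, f (b a) = d a • b a +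
        ∑ i : Fin n,
          (if (a : ℕ) = (i : ℕ) + 1 ∧ t a = true ∧ d i = d a then (1 : ℂ) else 0) • b i := by
  classical
  have htors : Module.IsTorsion ℂ[X] (Module.AEval' f) :=
    Module.AEval.isTorsion_of_finiteDimensional ℂ (Fin n → ℂ) f
  obtain ⟨ι, hι, p, hp, e, ⟨g⟩⟩ :=
    Module.equiv_directSum_of_isTorsion (R := ℂ[X]) (M := Module.AEval' f) htors
  haveI := hι
  choose μ B hB0 hBsucc using fun i => quot_basis_irred (p i) (hp i) (e i)
  set b0 : Basis (Σ i : ι, Fin (e i)) ℂ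
      (DirectSum ι fun i => ℂ[X] ⧸ Submodule.span ℂ[X] {p i ^ e i}) := DFinsupp.basis B with hb0
  have hb0app : ∀ (i : ι) (j : Fin (e i)), b0 ⟨i, j⟩ = DFinsupp.single i (B i j) :=
    fun i j => dfinsupp_basis_apply' B ⟨i, j⟩
  have hXb0_0 : ∀ (i : ι) (h : 0 < e i),
      (X : ℂ[X]) • b0 ⟨i, ⟨0, h⟩⟩ = μ i • b0 ⟨i, ⟨0, h⟩⟩ := by
    intro i h
    rw [hb0app, ds_single_smul, ds_single_smul', hB0 i h]
  have hXb0_succ : ∀ (i : ι) (j : ℕ) (h : j + 1 < e i),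
      (X : ℂ[X]) • b0 ⟨i, ⟨j + 1, h⟩⟩
        = μ i • b0 ⟨i, ⟨j + 1, h⟩⟩ + b0 ⟨i, ⟨j, Nat.lt_of_succ_lt h⟩⟩ := by
    intro i j h
    rw [hb0app, hb0app, ds_single_smul, ds_single_smul', hBsucc i j h, ds_single_add]
  set c : (Fin n → ℂ) ≃ₗ[ℂ] (DirectSum ι fun i => ℂ[X] ⧸ Submodule.span ℂ[X] {p i ^ e i}) :=
    ((Module.AEval'.of f).restrictScalars ℂ).trans (g.restrictScalars ℂ) with hc
  have hfc : ∀ y : (DirectSum ι fun i => ℂ[X] ⧸ Submodule.span ℂ[X] {p i ^ e i}), f (c.symm y) = c.symm ((X : ℂ[X]) • y) := by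
    intro y
    have h1 : c.symm ((X : ℂ[X]) • y)
        = (Module.AEval'.of f).symm (g.symm ((X : ℂ[X]) • y)) := rfl
    have h2 : g.symm ((X : ℂ[X]) • y) = (X : ℂ[X]) • g.symm y := map_smul g.symm X y
    rw [h1, h2, Module.AEval.of_symm_X_smul]
    rfl
  set b1 := b0.map c.symm with hb1
  set N := Fintype.card ι with hN
  set κ : ι ≃ Fin N := Fintype.equivFin ι with hκ
  set E : Fin N → ℕ := fun k => e (κ.symm k) with hE
  have hEκ : ∀ i : ι, E (κ i) = e i := fun i => by rw [hE]; simp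
  set es : (Σ i : ι, Fin (e i)) ≃ (Σ k : Fin N, Fin (E k)) :=
    Equiv.sigmaCongr κ (fun i => finCongr (hEκ i).symm) with hes
  obtain ⟨σ0, hσ0⟩ := flatten_equiv E
  have htot : ∑ k, E k = n := by
    have h1 : Module.finrank ℂ (Fin n → ℂ) = n := by simp
    have h2 := Module.finrank_eq_card_basis b1
    rw [h1, Fintype.card_sigma] at h2
    simp only [Fintype.card_fin] at h2
    have h3 : ∑ k, E k = ∑ i : ι, e i := Equiv.sum_comp κ.symm e
    omega
  set σ : (Σ i : ι, Fin (e i)) ≃ Fin n := (es.trans σ0).trans (finCongr htot) with hσ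
  have hσsucc : ∀ (i : ι) (j j' : Fin (e i)), (j' : ℕ) = (j : ℕ) + 1 →
      (σ ⟨i, j'⟩ : ℕ) = (σ ⟨i, j⟩ : ℕ) + 1 := by
    intro i j j' hjj
    have h1 : σ ⟨i, j'⟩ = finCongr htot (σ0 (es ⟨i, j'⟩)) := rfl
    have h2 : es ⟨i, j'⟩ = ⟨κ i, finCongr (hEκ i).symm j'⟩ := rfl
    have h3 : es ⟨i, j⟩ = ⟨κ i, finCongr (hEκ i).symm j⟩ := rfl
    show ((σ0 (es ⟨i, j'⟩) : Fin (∑ k, E k)) : ℕ) = ((σ0 (es ⟨i, j⟩) : Fin (∑ k, E k)) : ℕ) + 1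
    rw [h2, h3]
    exact hσ0 (κ i) _ _ (by simpa using hjj)
  set b : Basis (Fin n) ℂ (Fin n → ℂ) := b1.reindex σ with hb
  set d : Fin n → ℂ := fun a => μ (σ.symm a).1 with hd
  set t : Fin n → Bool := fun a => decide (0 < ((σ.symm a).2 : ℕ)) with ht
  refine ⟨b, d, t, ?_⟩
  intro a
  have hba : b a = c.symm (b0 (σ.symm a)) := by rw [hb, Basis.reindex_apply, hb1, Basis.map_apply]
  rcases hx : σ.symm a with ⟨i, jj⟩
  have ha : a = σ ⟨i, jj⟩ := by rw [← hx, Equiv.apply_symm_apply]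
  have hda : d a = μ i := by simp only [hd]; rw [hx]
  have hba2 : b a = c.symm (b0 ⟨i, jj⟩) := by rw [hba, hx]
  rcases Nat.eq_zero_or_pos (jj : ℕ) with h0 | hpos
  · have hta : t a = false := by simp only [ht]; rw [hx]; simp [h0]
    have hsum0 : (∑ i' : Fin n,
        (if (a : ℕ) = (i' : ℕ) + 1 ∧ t a = true ∧ d i' = d a then (1 : ℂ) else 0) • b i') = 0 := by
      apply Finset.sum_eq_zero
      intro i' _
      rw [if_neg, zero_smul]
      rintro ⟨-, htt, -⟩
      rw [hta] at htt
      exact Bool.false_ne_true htt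
    rw [hsum0, add_zero, hba2, hda]
    have hjj : jj = ⟨0, jj.pos⟩ := Fin.ext h0
    rw [hfc, hjj, hXb0_0 i jj.pos, map_smul]
  · set jv : ℕ := (jj : ℕ) - 1 with hjv
    have hlt : jv + 1 < e i := by omega
    have hjj2 : jj = ⟨jv + 1, hlt⟩ := Fin.ext (by simp only [hjv]; omega)
    set j' : Fin (e i) := ⟨jv, Nat.lt_of_succ_lt hlt⟩ with hj'
    set a' : Fin n := σ ⟨i, j'⟩ with ha'
    have hkey : (a : ℕ) = (a' : ℕ) + 1 := by
      rw [ha, ha']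
      exact hσsucc i j' jj (by simp only [hjv, hj']; omega)
    have hσa' : σ.symm a' = ⟨i, j'⟩ := Equiv.symm_apply_apply σ _
    have hda' : d a' = μ i := by simp only [hd]; rw [hσa']
    have hta : t a = true := by simp only [ht]; rw [hx]; simpa using hpos
    have hba' : b a' = c.symm (b0 ⟨i, j'⟩) := by
      rw [hb, Basis.reindex_apply, hb1, Basis.map_apply, hσa']
    have hsum : (∑ i' : Fin n,
        (if (a : ℕ) = (i' : ℕ) + 1 ∧ t a = true ∧ d i' = d a then (1 : ℂ) else 0) • b i')
        = b a' := by
      rw [Finset.sum_eq_single a']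
      · rw [if_pos ⟨hkey, hta, by rw [hda', hda]⟩, one_smul]
      · intro i' _ hne
        rw [if_neg, zero_smul]
        rintro ⟨h1, -, -⟩
        exact hne (Fin.ext (by omega))
      · intro h; exact absurd (Finset.mem_univ a') h
    rw [hsum, hba2, hda, hba']
    rw [hfc, hjj2, hXb0_succ i jv hlt, map_add, map_smul]


lemma exists_jordan_similar {n : ℕ} (H : Matrix (Fin n) (Fin n) ℂ) :
    ∃ S J : Matrix (Fin n) (Fin n) ℂ, IsUnit S ∧ IsJordanMatrix J ∧ H = S * J * S⁻¹ := by
  classical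
  obtain ⟨b, d, t, hb⟩ := exists_jordan_basis (Matrix.toLin' H)
  set J : Matrix (Fin n) (Fin n) ℂ := fun i j =>
    (if i = j then d j else 0) +
    (if (j : ℕ) = (i : ℕ) + 1 ∧ t j = true ∧ d i = d j then 1 else 0) with hJ
  have hJent : ∀ i j : Fin n, J i j = (if i = j then d j else 0) +
      (if (j : ℕ) = (i : ℕ) + 1 ∧ t j = true ∧ d i = d j then 1 else 0) := fun i j => rfl
  have hdiag : ∀ i : Fin n, J i i = d i := by
    intro i
    rw [hJent, if_pos rfl, if_neg (fun h => absurd h.1 (by omega) :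
      ¬((i : ℕ) = (i : ℕ) + 1 ∧ t i = true ∧ d i = d i)), add_zero]
  have hJordan : IsJordanMatrix J := by
    constructor
    · intro i j hne hne2
      have h1 : ¬ (i = j) := fun h => hne (by rw [h])
      rw [hJent, if_neg h1, if_neg (fun h => hne2 h.1), zero_add]
    · intro i j hij
      have h1 : ¬ (i = j) := fun h => by rw [h] at hij; omega
      by_cases h2 : (j : ℕ) = (i : ℕ) + 1 ∧ t j = true ∧ d i = d j
      · right
        constructor
        · rw [hJent, if_neg h1, zero_add, if_pos h2]
        · rw [hdiag, hdiag, h2.2.2]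
      · left
        rw [hJent, if_neg h1, zero_add, if_neg h2]
  have hM : LinearMap.toMatrix b b (Matrix.toLin' H) = J := by
    have hsum : ∀ i j : Fin n, (∑ k : Fin n, (b.repr
        ((if (j : ℕ) = (k : ℕ) + 1 ∧ t j = true ∧ d k = d j then (1 : ℂ) else 0) • b k)) i)
        = (if (j : ℕ) = (i : ℕ) + 1 ∧ t j = true ∧ d i = d j then (1 : ℂ) else 0) := by
      intro i j
      rw [Finset.sum_eq_single i]
      · rw [map_smul, Finsupp.smul_apply, Basis.repr_self, Finsupp.single_apply, if_pos rfl,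
          smul_eq_mul, mul_one]
      · intro k _ hki
        rw [map_smul, Finsupp.smul_apply, Basis.repr_self, Finsupp.single_apply, if_neg hki,
          smul_eq_mul, mul_zero]
      · intro h; exact absurd (Finset.mem_univ i) h
    ext i j
    rw [LinearMap.toMatrix_apply, hb j, map_add, map_smul, map_sum, Finsupp.add_apply,
      Finsupp.smul_apply, Basis.repr_self, Finset.sum_apply', hsum i j, Finsupp.single_apply,
      smul_eq_mul, mul_ite, mul_one, mul_zero]
    rw [hJent]
    congr 1
    by_cases h : i = j
    · rw [if_pos h.symm, if_pos h]
    · rw [if_neg (fun hh => h hh.symm), if_neg h]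
  set P := (Pi.basisFun ℂ (Fin n)).toMatrix ⇑b with hP
  set Pinv := b.toMatrix ⇑(Pi.basisFun ℂ (Fin n)) with hPinv
  have h1 : P * Pinv = 1 := Basis.toMatrix_mul_toMatrix_flip _ _
  have hPu : IsUnit P := by
    rw [Matrix.isUnit_iff_isUnit_det]
    apply IsUnit.of_mul_eq_one Pinv.det
    rw [← Matrix.det_mul, h1, Matrix.det_one]
  have hH : P * J * Pinv = H := by
    rw [← hM]
    have h2 := basis_toMatrix_mul_linearMap_toMatrix_mul_basis_toMatrix
      (Pi.basisFun ℂ (Fin n)) b (Pi.basisFun ℂ (Fin n)) b (Matrix.toLin' H)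
    rw [LinearMap.toMatrix_eq_toMatrix', LinearMap.toMatrix'_toLin'] at h2
    exact h2
  exact ⟨P, J, hPu, hJordan, by rw [← hH, Matrix.inv_eq_right_inv h1]⟩


end

end JordanSVD

theorem jordanSVD_iff_polarDecomposition {n : ℕ}
    (A B : Matrix (Fin n) (Fin n) ℂ) :
    (∃ (P Q J : Matrix (Fin n) (Fin n) ℂ), IsUnit P ∧ IsUnit Q ∧
        IsJordanMatrix J ∧ A = P * J * Q⁻¹ ∧ B = Q * J * P⁻¹) ↔
    (∃ (W H : Matrix (Fin n) (Fin n) ℂ), IsUnit W ∧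
        A = W * H ∧ B = H * W⁻¹) := by
  constructor
  · rintro ⟨P, Q, J, hP, hQ, hJ, hA, hB⟩
    have hdP : IsUnit P.det := (Matrix.isUnit_iff_isUnit_det P).mp hP
    have hdQ : IsUnit Q.det := (Matrix.isUnit_iff_isUnit_det Q).mp hQ
    have h1 : (P * Q⁻¹) * (Q * P⁻¹) = 1 := by
      simp only [Matrix.mul_assoc]
      rw [← Matrix.mul_assoc Q⁻¹ Q, Matrix.nonsing_inv_mul Q hdQ, Matrix.one_mul,
        Matrix.mul_nonsing_inv P hdP]
    have h2 : (Q * P⁻¹) * (P * Q⁻¹) = 1 := by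
      simp only [Matrix.mul_assoc]
      rw [← Matrix.mul_assoc P⁻¹ P, Matrix.nonsing_inv_mul P hdP, Matrix.one_mul,
        Matrix.mul_nonsing_inv Q hdQ]
    refine ⟨P * Q⁻¹, Q * J * Q⁻¹, ⟨⟨P * Q⁻¹, Q * P⁻¹, h1, h2⟩, rfl⟩, ?_, ?_⟩
    · rw [hA]
      simp only [Matrix.mul_assoc]
      rw [← Matrix.mul_assoc Q⁻¹ Q, Matrix.nonsing_inv_mul Q hdQ, Matrix.one_mul]
    · rw [hB, Matrix.inv_eq_right_inv h1]
      simp only [Matrix.mul_assoc]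
      rw [← Matrix.mul_assoc Q⁻¹ Q, Matrix.nonsing_inv_mul Q hdQ, Matrix.one_mul]
  · rintro ⟨W, Hm, hW, hA, hB⟩
    obtain ⟨S, J, hS, hJ, hH⟩ := JordanSVD.exists_jordan_similar Hm
    refine ⟨W * S, S, J, hW.mul hS, hS, hJ, ?_, ?_⟩
    · rw [hA, hH]; simp only [Matrix.mul_assoc]
    · rw [hB, hH, Matrix.mul_inv_rev]; simp only [Matrix.mul_assoc]
end

section
/- Let u₁, …, uₙ be vectors in the free module (ℂ⊕ℂ)^d over the double-complex ring (d > n) that are orthonormal with respect to the sesquilinear form ⟨v,w⟩ = Σᵢ vᵢ* wᵢ, where * swaps components. Then there exists a vector w orthogonal to all uᵢ with ⟨w,w⟩ = 1; hence any orthonormal set of size n < d extends to an orthonormal set of size n+1. -/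
/-- The sesquilinear form `⟨v,w⟩ = ∑ i, (v i)* * w i` on `(ℂ ⊕ ℂ)^d`, where the
involution on the double-complex numbers `ℂ × ℂ` swaps the two components. -/
noncomputable def dcInner {d : ℕ} (v w : Fin d → ℂ × ℂ) : ℂ × ℂ :=
  ∑ i, Prod.swap (v i) * w i

theorem extend_orthonormal_set {d n : ℕ} (hdn : n < d)
    (u : Fin n → Fin d → ℂ × ℂ)
    (horth : ∀ i j, dcInner (u i) (u j) = if i = j then 1 else 0) :
    ∃ w : Fin d → ℂ × ℂ, (∀ i, dcInner (u i) w = 0) ∧ dcInner w w = 1 := by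
  classical
  set a : Fin n → Fin d → ℂ := fun i j => (u i j).1 with ha
  set b : Fin n → Fin d → ℂ := fun i j => (u i j).2 with hb
  have hba : ∀ i i', ∑ j, b i j * a i' j = if i = i' then 1 else 0 := by
    intro i i'
    have h := congrArg Prod.fst (horth i i')
    simpa [dcInner, Prod.fst_sum, apply_ite Prod.fst] using h
  have hab : ∀ i i', ∑ j, a i j * b i' j = if i = i' then 1 else 0 := by
    intro i i'
    have h := congrArg Prod.snd (horth i i')
    simpa [dcInner, Prod.snd_sum, apply_ite Prod.snd] using h
  -- choose k with c_k ≠ 0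
  have key : ∃ k : Fin d, (1 - ∑ i, a i k * b i k) ≠ 0 := by
    by_contra h
    push_neg at h
    have hsum : ∑ k : Fin d, (1 - ∑ i, a i k * b i k) = 0 := by
      simp [h]
    rw [Finset.sum_sub_distrib, Finset.sum_const, Finset.sum_comm] at hsum
    have hinner : ∀ i : Fin n, (∑ k : Fin d, a i k * b i k) = 1 := by
      intro i; simpa using hab i i
    rw [Finset.sum_congr rfl fun i _ => hinner i] at hsum
    simp only [Finset.card_univ, Fintype.card_fin, Finset.sum_const, nsmul_eq_mul,
      mul_one, sub_eq_zero] at hsum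
    have : d = n := by exact_mod_cast hsum
    omega
  obtain ⟨k, hk⟩ := key
  set c : ℂ := 1 - ∑ i, a i k * b i k with hc
  set e : Fin d → ℂ := fun j => if j = k then 1 else 0 with he
  set p : Fin d → ℂ := fun j => e j - ∑ i, b i k * a i j with hp
  set q : Fin d → ℂ := fun j => e j - ∑ i, a i k * b i j with hq
  refine ⟨fun j => (c⁻¹ * p j, q j), ?_, ?_⟩
  · intro i
    have h1 : ∑ j, b i j * p j = 0 := by
      simp only [hp, mul_sub, Finset.sum_sub_distrib, Finset.mul_sum]
      have h2 : ∑ j, b i j * e j = b i k := by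
        simp [he, mul_ite, Finset.sum_ite_eq']
      rw [h2, Finset.sum_comm]
      have h3 : ∀ i' : Fin n, ∑ j, b i j * (b i' k * a i' j)
          = b i' k * (if i = i' then 1 else 0) := by
        intro i'
        rw [← hba i i', Finset.mul_sum]
        apply Finset.sum_congr rfl; intro j _; ring
      rw [Finset.sum_congr rfl fun i' _ => h3 i']
      simp
    have h4 : ∑ j, a i j * q j = 0 := by
      simp only [hq, mul_sub, Finset.sum_sub_distrib, Finset.mul_sum]
      have h2 : ∑ j, a i j * e j = a i k := by
        simp [he, mul_ite, Finset.sum_ite_eq']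
      rw [h2, Finset.sum_comm]
      have h3 : ∀ i' : Fin n, ∑ j, a i j * (a i' k * b i' j)
          = a i' k * (if i = i' then 1 else 0) := by
        intro i'
        rw [← hab i i', Finset.mul_sum]
        apply Finset.sum_congr rfl; intro j _; ring
      rw [Finset.sum_congr rfl fun i' _ => h3 i']
      simp
    have : dcInner (u i) (fun j => (c⁻¹ * p j, q j))
        = (c⁻¹ * ∑ j, b i j * p j, ∑ j, a i j * q j) := by
      simp [dcInner, Prod.ext_iff, Prod.fst_sum, Prod.snd_sum, Finset.mul_sum,
        mul_left_comm]
      exact ⟨rfl, rfl⟩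
    rw [this, h1, h4]
    simp
  · -- key computation: ∑ j, q j * p j = c
    have hqp : ∑ j, q j * p j = c := by
      have expand : ∀ j, q j * p j =
          e j * e j - e j * (∑ i, b i k * a i j) - (∑ i, a i k * b i j) * e j
            + (∑ i, a i k * b i j) * (∑ i, b i k * a i j) := by
        intro j; simp only [hp, hq]; ring
      rw [Finset.sum_congr rfl fun j _ => expand j]
      rw [Finset.sum_add_distrib, Finset.sum_sub_distrib, Finset.sum_sub_distrib]
      have t1 : ∑ j, e j * e j = 1 := by
        simp [he, ite_mul, Finset.sum_ite_eq']
      have t2 : ∑ j, e j * (∑ i, b i k * a i j) = ∑ i, a i k * b i k := by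
        simp only [he, ite_mul, one_mul, zero_mul]
        rw [Finset.sum_ite_eq' Finset.univ k]
        simp [mul_comm]
      have t3 : ∑ j, (∑ i, a i k * b i j) * e j = ∑ i, a i k * b i k := by
        simp only [he, mul_ite, mul_one, mul_zero]
        rw [Finset.sum_ite_eq' Finset.univ k]
        simp
      have t4 : ∑ j, (∑ i, a i k * b i j) * (∑ i, b i k * a i j)
          = ∑ i, a i k * b i k := by
        have step : ∀ j, (∑ i, a i k * b i j) * (∑ i, b i k * a i j)
            = ∑ i, ∑ i', (a i k * b i' k) * (b i j * a i' j) := by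
          intro j
          rw [Finset.sum_mul_sum]
          apply Finset.sum_congr rfl; intro i _
          apply Finset.sum_congr rfl; intro i' _; ring
        rw [Finset.sum_congr rfl fun j _ => step j, Finset.sum_comm]
        apply Finset.sum_congr rfl; intro i _
        rw [Finset.sum_comm]
        have inner : ∀ i' : Fin n, ∑ j, (a i k * b i' k) * (b i j * a i' j)
            = (a i k * b i' k) * (if i = i' then 1 else 0) := by
          intro i'
          rw [← hba i i', Finset.mul_sum]
        rw [Finset.sum_congr rfl fun i' _ => inner i']
        simp
      rw [t1, t2, t3, t4, hc]
      ring
    have hpq : ∑ j, p j * q j = c := by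
      rw [← hqp]; apply Finset.sum_congr rfl; intro j _; ring
    apply Prod.ext
    · have e1 : (dcInner (fun j => (c⁻¹ * p j, q j)) (fun j => (c⁻¹ * p j, q j))).1
          = ∑ j, q j * (c⁻¹ * p j) := by
        simp [dcInner, Prod.fst_sum]
      have e2 : ∑ j, q j * (c⁻¹ * p j) = c⁻¹ * ∑ j, q j * p j := by
        rw [Finset.mul_sum]; exact Finset.sum_congr rfl fun j _ => by ring
      rw [e1, e2, hqp, inv_mul_cancel₀ hk]; rfl
    · have e1 : (dcInner (fun j => (c⁻¹ * p j, q j)) (fun j => (c⁻¹ * p j, q j))).2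
          = ∑ j, (c⁻¹ * p j) * q j := by
        simp [dcInner, Prod.snd_sum]
      have e2 : ∑ j, (c⁻¹ * p j) * q j = c⁻¹ * ∑ j, p j * q j := by
        rw [Finset.mul_sum]; exact Finset.sum_congr rfl fun j _ => by ring
      rw [e1, e2, hpq, inv_mul_cancel₀ hk]; rfl
end
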